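/- arXiv:1102.1146 — 5 statements merged into one kernel-verified Lean document; each statement's English description precedes it below -/
import Mathlib

section
/- The two conditions ∫₀¹ x^{-1} (∫₀ˣ ν̄(y) dy) dx < ∞ and Σ_{k=1}^∞ Φ(k)/k² < ∞ are equivalent, where ν̄(x) = ν([x,1]) and Φ(z) = ∫₀¹ (1-(1-x)^z) ν(dx). -/
open MeasureTheory Set ENNReal


section aux

-- Real-number inequalities
lemma bern_upper {t : ℝ} (ht1 : t ≤ 1) (k : ℕ) :
    1 - (1-t)^k ≤ min ((k:ℝ)*t) 1 := by
  apply le_min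
  · have h := one_add_mul_le_pow (a := -t) (by linarith) k
    have h2 : (1 : ℝ) + (k:ℝ) * (-t) = 1 - (k:ℝ)*t := by ring
    have h3 : (1 : ℝ) + -t = 1 - t := by ring
    rw [h2, h3] at h
    linarith
  · have : (0:ℝ) ≤ (1-t)^k := pow_nonneg (by linarith) k
    linarith

lemma bern_lower {t : ℝ} (ht0 : 0 ≤ t) (ht1 : t ≤ 1) (k : ℕ) :
    min ((k:ℝ)*t) 1 ≤ 2 * (1 - (1-t)^k) := by
  have hkt : 0 ≤ (k:ℝ)*t := by positivity
  have hpos : (0:ℝ) < 1 + (k:ℝ)*t := by linarith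
  have h1 : (1-t)^k ≤ ((1+t)^k)⁻¹ := by
    have h2 : (1-t) * (1+t) ≤ 1 := by nlinarith
    have h3 : (0:ℝ) < (1+t)^k := by positivity
    rw [inv_eq_one_div, le_div_iff₀ h3]
    calc (1-t)^k * (1+t)^k = ((1-t)*(1+t))^k := (mul_pow _ _ _).symm
      _ ≤ 1^k := pow_le_pow_left₀ (by nlinarith) h2 k
      _ = 1 := one_pow k
  have h4 : ((1+t)^k)⁻¹ ≤ (1 + (k:ℝ)*t)⁻¹ := by
    apply inv_anti₀ hpos
    have := one_add_mul_le_pow (a := t) (by linarith) k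
    linarith [this]
  have h5 : (1-t)^k ≤ (1 + (k:ℝ)*t)⁻¹ := h1.trans h4
  have h6 : (k:ℝ)*t / (1 + (k:ℝ)*t) ≤ 1 - (1-t)^k := by
    have : (k:ℝ)*t / (1 + (k:ℝ)*t) = 1 - (1 + (k:ℝ)*t)⁻¹ := by field_simp; ring
    rw [this]; linarith
  rcases le_total ((k:ℝ)*t) 1 with h | h
  · rw [min_eq_left h]
    have : (k:ℝ)*t ≤ 2 * ((k:ℝ)*t / (1 + (k:ℝ)*t)) := by
      rw [mul_div_assoc', le_div_iff₀ hpos]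
      nlinarith
    linarith
  · rw [min_eq_right h]
    have : (1:ℝ) ≤ 2 * ((k:ℝ)*t / (1 + (k:ℝ)*t)) := by
      rw [mul_div_assoc', le_div_iff₀ hpos]
      nlinarith
    linarith

noncomputable def Gg (t : ℝ) : ℝ≥0∞ :=
  ∫⁻ x in Ioo (0:ℝ) 1, ENNReal.ofReal (min t x) * (ENNReal.ofReal x)⁻¹

noncomputable def Ss (t : ℝ) : ℝ≥0∞ :=
  ∑' n : ℕ, ENNReal.ofReal (min t (1/((n:ℝ)+1)) / ((n:ℝ)+1))

noncomputable def Ff (t : ℝ) : ℝ≥0∞ :=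
  ∑' n : ℕ, ENNReal.ofReal ((1 - (1-t)^(n+1)) / ((n:ℝ)+1)^2)

lemma min_scale {t : ℝ} (ht0 : 0 ≤ t) {k : ℝ} (hk : 0 < k) :
    min (k*t) 1 = k * min t (1/k) := by
  rcases le_total t (1/k) with h | h
  · rw [min_eq_left h, min_eq_left]
    calc k*t ≤ k*(1/k) := by apply mul_le_mul_of_nonneg_left h hk.le
      _ = 1 := by field_simp
  · rw [min_eq_right h, min_eq_right]
    · field_simp
    · calc (1:ℝ) = k * (1/k) := by field_simp
        _ ≤ k*t := by apply mul_le_mul_of_nonneg_left h hk.le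

lemma FS {t : ℝ} (ht : t ∈ Ioc (0:ℝ) 1) : Ff t ≤ Ss t := by
  apply ENNReal.tsum_le_tsum
  intro n
  apply ENNReal.ofReal_le_ofReal
  set k : ℝ := (n:ℝ)+1 with hk
  have hk0 : (0:ℝ) < k := by positivity
  have hcast : ((n+1:ℕ):ℝ) = k := by push_cast; ring
  have h1 : 1 - (1-t)^(n+1) ≤ k * min t (1/k) := by
    have := bern_upper ht.2 (n+1)
    rw [hcast] at this
    rw [← min_scale ht.1.le hk0]
    exact this
  calc (1 - (1-t)^(n+1)) / k^2 ≤ (k * min t (1/k)) / k^2 := by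
        apply div_le_div_of_nonneg_right h1 (by positivity) |>.trans_eq rfl
    _ = min t (1/k) / k := by field_simp

lemma SF {t : ℝ} (ht : t ∈ Ioc (0:ℝ) 1) : Ss t ≤ 2 * Ff t := by
  rw [Ff, ← ENNReal.tsum_mul_left]
  apply ENNReal.tsum_le_tsum
  intro n
  have h2 : (2:ℝ≥0∞) = ENNReal.ofReal (2:ℝ) := by norm_num
  rw [h2, ← ENNReal.ofReal_mul (by norm_num)]
  apply ENNReal.ofReal_le_ofReal
  set k : ℝ := (n:ℝ)+1 with hk
  have hk0 : (0:ℝ) < k := by positivity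
  have hcast : ((n+1:ℕ):ℝ) = k := by push_cast; ring
  have h1 : k * min t (1/k) ≤ 2 * (1 - (1-t)^(n+1)) := by
    rw [← min_scale ht.1.le hk0]
    have := bern_lower ht.1.le ht.2 (n+1)
    rw [hcast] at this
    exact this
  calc min t (1/k) / k = (k * min t (1/k)) / k^2 := by field_simp
    _ ≤ (2 * (1 - (1-t)^(n+1))) / k^2 := by
        apply div_le_div_of_nonneg_right h1 (by positivity)
    _ = 2 * ((1 - (1-t)^(n+1)) / k^2) := by ring

lemma cover_Ioo : Ioo (0:ℝ) 1 ⊆ ⋃ n : ℕ, Ioc (1/((n:ℝ)+2)) (1/((n:ℝ)+1)) := by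
  intro x hx
  have hx0 := hx.1
  have hx1 := hx.2
  have hinv : (1:ℝ) < 1/x := by rw [lt_div_iff₀ hx0]; linarith
  set m : ℕ := ⌊1/x⌋₊ with hm
  have hm1 : 1 ≤ m := Nat.le_floor (by exact_mod_cast hinv.le)
  have hfl : (m:ℝ) ≤ 1/x := Nat.floor_le (by positivity)
  have hfu : 1/x < (m:ℝ) + 1 := Nat.lt_floor_add_one _
  refine mem_iUnion.2 ⟨m - 1, ?_⟩
  have hcast : ((m-1:ℕ):ℝ) = (m:ℝ) - 1 := by
    rw [Nat.cast_sub hm1]; norm_num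
  have hmpos : (0:ℝ) < m := by exact_mod_cast hm1
  have h3 : x * (1/x) = 1 := by field_simp
  constructor
  · rw [hcast, show ((m:ℝ) - 1) + 2 = (m:ℝ) + 1 from by ring,
      div_lt_iff₀ (by positivity)]
    nlinarith [mul_lt_mul_of_pos_left hfu hx0]
  · rw [hcast, show ((m:ℝ) - 1) + 1 = (m:ℝ) from by ring, le_div_iff₀ hmpos]
    nlinarith [mul_le_mul_of_nonneg_left hfl hx0.le]

lemma piece_subset (n : ℕ) : Ioo (1/((n:ℝ)+2)) (1/((n:ℝ)+1)) ⊆ Ioo (0:ℝ) 1 := by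
  intro x hx
  constructor
  · have : (0:ℝ) < 1/((n:ℝ)+2) := by positivity
    linarith [hx.1]
  · have h1 : 1/((n:ℝ)+1) ≤ 1 := by
      rw [div_le_one (by positivity)]; linarith [Nat.cast_nonneg (α := ℝ) n]
    linarith [hx.2]

lemma piece_disjoint : Pairwise (Function.onFun Disjoint
    (fun n : ℕ => Ioo (1/((n:ℝ)+2)) (1/((n:ℝ)+1)))) := by
  have key : ∀ m n : ℕ, m < n → Disjoint (Ioo (1/((m:ℝ)+2)) (1/((m:ℝ)+1)))
      (Ioo (1/((n:ℝ)+2)) (1/((n:ℝ)+1))) := by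
    intro m n hmn
    rw [Set.disjoint_left]
    rintro x ⟨hx1, _⟩ ⟨_, hx4⟩
    have hle : (1:ℝ)/((n:ℝ)+1) ≤ 1/((m:ℝ)+2) := by
      apply div_le_div_of_nonneg_left (by norm_num) (by positivity)
      have : (m:ℝ) + 1 ≤ (n:ℝ) := by exact_mod_cast hmn
      linarith
    linarith
  intro m n hmn
  rcases lt_or_gt_of_ne hmn with h | h
  · exact key m n h
  · exact (key n m h).symm

lemma interval_calc (n : ℕ) :
    (1:ℝ)/((n:ℝ)+1) - 1/((n:ℝ)+2) = 1/(((n:ℝ)+1)*((n:ℝ)+2)) := by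
  have h1 : ((n:ℝ)+1) ≠ 0 := by positivity
  have h2 : ((n:ℝ)+2) ≠ 0 := by positivity
  field_simp
  ring

lemma ofReal_inv_nat (c : ℝ) (hc : 0 < c) :
    (ENNReal.ofReal (1/c))⁻¹ = ENNReal.ofReal c := by
  rw [one_div, ENNReal.ofReal_inv_of_pos hc, inv_inv]

lemma prod_calc (c : ℝ) (hc : 0 ≤ c) (n : ℕ) :
    ENNReal.ofReal c * ENNReal.ofReal ((n:ℝ)+2) *
      ENNReal.ofReal (1/((n:ℝ)+1) - 1/((n:ℝ)+2)) = ENNReal.ofReal (c / ((n:ℝ)+1)) := by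
  rw [← ENNReal.ofReal_mul hc, ← ENNReal.ofReal_mul (by positivity), interval_calc n]
  congr 1
  have h1 : ((n:ℝ)+1) ≠ 0 := by positivity
  have h2 : ((n:ℝ)+2) ≠ 0 := by positivity
  field_simp

lemma prod_calc' (c : ℝ) (hc : 0 ≤ c) (n : ℕ) :
    ENNReal.ofReal c * ENNReal.ofReal ((n:ℝ)+1) *
      ENNReal.ofReal (1/((n:ℝ)+1) - 1/((n:ℝ)+2)) = ENNReal.ofReal (c / ((n:ℝ)+2)) := by
  rw [← ENNReal.ofReal_mul hc, ← ENNReal.ofReal_mul (by positivity), interval_calc n]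
  congr 1
  have h1 : ((n:ℝ)+1) ≠ 0 := by positivity
  have h2 : ((n:ℝ)+2) ≠ 0 := by positivity
  field_simp

lemma GS {t : ℝ} (ht : t ∈ Ioc (0:ℝ) 1) : Gg t ≤ Ss t := by
  have step1 : Gg t ≤ ∑' n : ℕ, ∫⁻ x in Ioc (1/((n:ℝ)+2)) (1/((n:ℝ)+1)),
      ENNReal.ofReal (min t x) * (ENNReal.ofReal x)⁻¹ := by
    refine le_trans (lintegral_mono_set cover_Ioo) ?_
    exact lintegral_iUnion_le _ _
  refine step1.trans ?_
  apply ENNReal.tsum_le_tsum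
  intro n
  set a : ℝ := 1/((n:ℝ)+2) with ha
  set b : ℝ := 1/((n:ℝ)+1) with hb
  have ha0 : (0:ℝ) < a := by rw [ha]; positivity
  have hb0 : (0:ℝ) < b := by rw [hb]; positivity
  have hminnn : 0 ≤ min t b := le_min ht.1.le hb0.le
  have hub : ∀ x ∈ Ioc a b, ENNReal.ofReal (min t x) * (ENNReal.ofReal x)⁻¹ ≤
      ENNReal.ofReal (min t b) * (ENNReal.ofReal a)⁻¹ := by
    intro x hxab
    apply mul_le_mul'
    · exact ENNReal.ofReal_le_ofReal (min_le_min le_rfl hxab.2)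
    · exact ENNReal.inv_le_inv.2 (ENNReal.ofReal_le_ofReal hxab.1.le)
  calc ∫⁻ x in Ioc a b, ENNReal.ofReal (min t x) * (ENNReal.ofReal x)⁻¹
      ≤ ∫⁻ _ in Ioc a b, ENNReal.ofReal (min t b) * (ENNReal.ofReal a)⁻¹ :=
        setLIntegral_mono' measurableSet_Ioc hub
    _ = ENNReal.ofReal (min t b) * (ENNReal.ofReal a)⁻¹ * volume (Ioc a b) :=
        setLIntegral_const _ _
    _ = ENNReal.ofReal (min t b / ((n:ℝ)+1)) := by
        rw [Real.volume_Ioc, ha, ofReal_inv_nat _ (by positivity)]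
        exact prod_calc _ hminnn n

lemma SG {t : ℝ} (ht : t ∈ Ioc (0:ℝ) 1) : Ss t ≤ Gg t + ENNReal.ofReal t := by
  have hsplit := tsum_eq_zero_add'
    (f := fun n : ℕ => ENNReal.ofReal (min t (1/((n:ℝ)+1)) / ((n:ℝ)+1)))
    ENNReal.summable
  rw [Ss, hsplit, add_comm]
  apply add_le_add
  · have hterm : ∀ n : ℕ, ENNReal.ofReal (min t (1/(((n+1:ℕ):ℝ)+1)) / (((n+1:ℕ):ℝ)+1)) =
        ENNReal.ofReal (min t (1/((n:ℝ)+2)) / ((n:ℝ)+2)) := by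
      intro n
      have e : ((n+1:ℕ):ℝ) + 1 = (n:ℝ)+2 := by push_cast; ring
      rw [e]
    calc ∑' n : ℕ, ENNReal.ofReal (min t (1/(((n+1:ℕ):ℝ)+1)) / (((n+1:ℕ):ℝ)+1))
        = ∑' n : ℕ, ENNReal.ofReal (min t (1/((n:ℝ)+2)) / ((n:ℝ)+2)) :=
          tsum_congr hterm
      _ ≤ ∑' n : ℕ, ∫⁻ x in Ioo (1/((n:ℝ)+2)) (1/((n:ℝ)+1)),
          ENNReal.ofReal (min t x) * (ENNReal.ofReal x)⁻¹ := by
          apply ENNReal.tsum_le_tsum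
          intro n
          set a : ℝ := 1/((n:ℝ)+2) with ha
          set b : ℝ := 1/((n:ℝ)+1) with hb
          have ha0 : (0:ℝ) < a := by rw [ha]; positivity
          have hb0 : (0:ℝ) < b := by rw [hb]; positivity
          have hminnn : 0 ≤ min t a := le_min ht.1.le ha0.le
          have hlb : ∀ x ∈ Ioo a b, ENNReal.ofReal (min t a) * (ENNReal.ofReal b)⁻¹ ≤
              ENNReal.ofReal (min t x) * (ENNReal.ofReal x)⁻¹ := by
            intro x hxab
            apply mul_le_mul'
            · exact ENNReal.ofReal_le_ofReal (min_le_min le_rfl hxab.1.le)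
            · exact ENNReal.inv_le_inv.2 (ENNReal.ofReal_le_ofReal hxab.2.le)
          calc ENNReal.ofReal (min t a / ((n:ℝ)+2))
              = ENNReal.ofReal (min t a) * (ENNReal.ofReal b)⁻¹ * volume (Ioo a b) := by
                rw [Real.volume_Ioo, hb, ofReal_inv_nat _ (by positivity)]
                exact (prod_calc' _ hminnn n).symm
            _ = ∫⁻ _ in Ioo a b, ENNReal.ofReal (min t a) * (ENNReal.ofReal b)⁻¹ :=
                (setLIntegral_const _ _).symm
            _ ≤ ∫⁻ x in Ioo a b, ENNReal.ofReal (min t x) * (ENNReal.ofReal x)⁻¹ :=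
                setLIntegral_mono' measurableSet_Ioo hlb
      _ = ∫⁻ x in ⋃ n : ℕ, Ioo (1/((n:ℝ)+2)) (1/((n:ℝ)+1)),
          ENNReal.ofReal (min t x) * (ENNReal.ofReal x)⁻¹ :=
          (lintegral_iUnion (fun _ => measurableSet_Ioo) piece_disjoint _).symm
      _ ≤ Gg t := lintegral_mono_set (iUnion_subset piece_subset)
  · apply le_of_eq
    norm_num [min_eq_left ht.2]




lemma sf_restrict (ν : Measure ℝ) (hx : ∫⁻ x in Ioc (0:ℝ) 1, ENNReal.ofReal x ∂ν < ⊤) :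
    SigmaFinite (ν.restrict (Ioc (0:ℝ) 1)) := by
  apply Measure.sigmaFinite_of_countable (S := Set.range
    (fun n : ℕ => Icc (1/((n:ℝ)+1)) 1 ∪ (Ioc (0:ℝ) 1)ᶜ)) (countable_range _)
  · rintro s ⟨n, rfl⟩
    have hsub : (Icc (1/((n:ℝ)+1)) 1 ∪ (Ioc (0:ℝ) 1)ᶜ) ∩ Ioc (0:ℝ) 1 ⊆
        Icc (1/((n:ℝ)+1)) 1 ∩ Ioc (0:ℝ) 1 := by
      rintro x ⟨hx1 | hx1, hx2⟩
      · exact ⟨hx1, hx2⟩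
      · exact absurd hx2 hx1
    have hε : (0:ℝ) < 1/((n:ℝ)+1) := by positivity
    have key : ENNReal.ofReal (1/((n:ℝ)+1)) * ν (Icc (1/((n:ℝ)+1)) 1 ∩ Ioc (0:ℝ) 1) ≤
        ∫⁻ x in Ioc (0:ℝ) 1, ENNReal.ofReal x ∂ν := by
      rw [← setLIntegral_const]
      refine le_trans (setLIntegral_mono' ((measurableSet_Icc).inter measurableSet_Ioc)
        (fun x hxm => ENNReal.ofReal_le_ofReal hxm.1.1)) ?_
      exact lintegral_mono_set inter_subset_right
    have hfin : ν (Icc (1/((n:ℝ)+1)) 1 ∩ Ioc (0:ℝ) 1) < ⊤ := by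
      by_contra hcon
      push_neg at hcon
      rw [top_le_iff.1 hcon, ENNReal.mul_top (ENNReal.ofReal_pos.2 hε).ne'] at key
      exact (key.trans_lt hx).ne rfl
    rw [Measure.restrict_apply' measurableSet_Ioc]
    exact lt_of_le_of_lt (measure_mono hsub) hfin
  · apply eq_univ_of_forall
    intro x
    rcases em (x ∈ Ioc (0:ℝ) 1) with hmem | hmem
    · obtain ⟨n, hn⟩ := exists_nat_one_div_lt hmem.1
      exact ⟨_, ⟨n, rfl⟩, Or.inl ⟨hn.le, hmem.2⟩⟩
    · exact ⟨_, ⟨0, rfl⟩, Or.inr hmem⟩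


lemma inner_eq (ν : Measure ℝ) [SigmaFinite (ν.restrict (Ioc (0:ℝ) 1))]
    {x : ℝ} (hx' : x ∈ Ioo (0:ℝ) 1) :
    ∫⁻ y in Ioo (0:ℝ) x, ν (Icc y 1) =
      ∫⁻ t in Ioc (0:ℝ) 1, ENNReal.ofReal (min t x) ∂ν := by
  calc ∫⁻ y in Ioo (0:ℝ) x, ν (Icc y 1)
      = ∫⁻ y in Ioo (0:ℝ) x, (ν.restrict (Ioc (0:ℝ) 1)) (Icc y 1) := by
        apply setLIntegral_congr_fun measurableSet_Ioo (fun y hy => ?_)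
        have hsub : Icc y 1 ⊆ Ioc (0:ℝ) 1 := fun z hz => ⟨lt_of_lt_of_le hy.1 hz.1, hz.2⟩
        rw [Measure.restrict_apply measurableSet_Icc, inter_eq_left.2 hsub]
    _ = ∫⁻ y in Ioo (0:ℝ) x, (∫⁻ t, (Icc y 1).indicator 1 t
          ∂(ν.restrict (Ioc (0:ℝ) 1))) := by
        apply setLIntegral_congr_fun measurableSet_Ioo (fun y hy => ?_)
        exact (lintegral_indicator_one measurableSet_Icc).symm
    _ = ∫⁻ t, (∫⁻ y in Ioo (0:ℝ) x, (Icc y 1).indicator 1 t)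
          ∂(ν.restrict (Ioc (0:ℝ) 1)) := by
        refine lintegral_lintegral_swap (μ := volume.restrict (Ioo 0 x))
          (ν := ν.restrict (Ioc (0:ℝ) 1))
          (f := fun y t => (Icc y 1).indicator 1 t) ?_
        have heq : (Function.uncurry fun y t => (Icc y 1).indicator (1 : ℝ → ℝ≥0∞) t) =
            ({p : ℝ × ℝ | p.1 ≤ p.2 ∧ p.2 ≤ 1}).indicator (fun _ => 1) := by
          funext p
          rcases p with ⟨y, t⟩
          by_cases h : y ≤ t ∧ t ≤ 1
          · simp [Function.uncurry, Set.indicator_apply, Set.mem_Icc, h]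
          · simp only [Function.uncurry, Set.indicator_apply, Set.mem_Icc, Set.mem_setOf_eq]
            rw [if_neg h, if_neg (by exact fun hc => h ⟨hc.1, hc.2⟩)]
        rw [heq]
        exact (measurable_const.indicator
          ((measurableSet_le measurable_fst measurable_snd).inter
            (measurableSet_le measurable_snd measurable_const))).aemeasurable
    _ = ∫⁻ t in Ioc (0:ℝ) 1, (∫⁻ y in Ioo (0:ℝ) x, (Icc y 1).indicator 1 t) ∂ν := rfl
    _ = ∫⁻ t in Ioc (0:ℝ) 1, ENNReal.ofReal (min t x) ∂ν := by
        apply setLIntegral_congr_fun measurableSet_Ioc (fun t ht => ?_)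
        have h1 : ∀ y : ℝ, (Icc y 1).indicator (1 : ℝ → ℝ≥0∞) t =
            (Iic t).indicator (1 : ℝ → ℝ≥0∞) y := by
          intro y
          by_cases hyt : y ≤ t
          · simp [Set.indicator_apply, Set.mem_Icc, Set.mem_Iic, hyt, ht.2]
          · simp [Set.indicator_apply, Set.mem_Icc, Set.mem_Iic, hyt]
        rw [lintegral_congr h1, lintegral_indicator_one measurableSet_Iic,
          Measure.restrict_apply measurableSet_Iic]
        rcases lt_or_ge t x with htx | hxt
        · have hset : Iic t ∩ Ioo (0:ℝ) x = Ioc 0 t := by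
            ext y
            constructor
            · rintro ⟨hy1, hy2, _⟩; exact ⟨hy2, hy1⟩
            · rintro ⟨hy1, hy2⟩; exact ⟨hy2, hy1, lt_of_le_of_lt hy2 htx⟩
          rw [hset, Real.volume_Ioc, sub_zero, min_eq_left htx.le]
        · have hset : Iic t ∩ Ioo (0:ℝ) x = Ioo 0 x := by
            apply inter_eq_right.2
            intro y hy
            exact le_of_lt (lt_of_lt_of_le hy.2 hxt)
          rw [hset, Real.volume_Ioo, sub_zero, min_eq_right hxt]


/-- The two conditions `∫₀¹ x⁻¹ (∫₀ˣ ν̄(y) dy) dx < ∞` and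
`∑_{k=1}^∞ Φ(k)/k² < ∞` are equivalent, where `ν̄(x) = ν([x,1])` and
`Φ(z) = ∫₀¹ (1-(1-x)^z) ν(dx)`. -/
theorem tail_integral_iff_sum_laplace
    (ν : Measure ℝ)
    (hx : ∫⁻ x in Ioc (0:ℝ) 1, ENNReal.ofReal x ∂ν < ⊤)
    (nubar : ℝ → ℝ≥0∞) (hnubar : ∀ x ∈ Ioo (0:ℝ) 1, nubar x = ν (Icc x 1))
    (Φ : ℕ → ℝ≥0∞)
    (hΦ : ∀ k : ℕ, Φ k = ∫⁻ x in Ioc (0:ℝ) 1, ENNReal.ofReal (1 - (1 - x) ^ k) ∂ν) :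
    (∫⁻ x in Ioo (0:ℝ) 1,
        (∫⁻ y in Ioo (0:ℝ) x, nubar y) / ENNReal.ofReal x < ⊤)
      ↔ (∑' k : ℕ, Φ (k + 1) / ((k : ℝ≥0∞) + 1) ^ 2 < ⊤) := by
  haveI : SigmaFinite (ν.restrict (Ioc (0:ℝ) 1)) := sf_restrict ν hx
  have step1 : (∫⁻ x in Ioo (0:ℝ) 1, (∫⁻ y in Ioo (0:ℝ) x, nubar y) / ENNReal.ofReal x)
      = ∫⁻ t in Ioc (0:ℝ) 1, Gg t ∂ν := by
    have h1 : ∀ z ∈ Ioo (0:ℝ) 1,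
        (∫⁻ y in Ioo (0:ℝ) z, nubar y) / ENNReal.ofReal z =
        ∫⁻ t in Ioc (0:ℝ) 1,
          ENNReal.ofReal (min t z) * (ENNReal.ofReal z)⁻¹ ∂ν := by
      intro z hz
      have hn : ∫⁻ y in Ioo (0:ℝ) z, nubar y = ∫⁻ y in Ioo (0:ℝ) z, ν (Icc y 1) :=
        setLIntegral_congr_fun measurableSet_Ioo (fun y hy =>
          hnubar y ⟨hy.1, hy.2.trans hz.2⟩)
      have hne : (ENNReal.ofReal z)⁻¹ ≠ ⊤ :=
        ENNReal.inv_ne_top.2 (ENNReal.ofReal_pos.2 hz.1).ne'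
      rw [hn, inner_eq ν hz, div_eq_mul_inv,
        ← lintegral_mul_const' _ _ hne]
    calc ∫⁻ x in Ioo (0:ℝ) 1, (∫⁻ y in Ioo (0:ℝ) x, nubar y) / ENNReal.ofReal x
        = ∫⁻ z in Ioo (0:ℝ) 1, (∫⁻ t, ENNReal.ofReal (min t z) * (ENNReal.ofReal z)⁻¹
            ∂(ν.restrict (Ioc (0:ℝ) 1))) :=
          setLIntegral_congr_fun measurableSet_Ioo h1
      _ = ∫⁻ t, (∫⁻ z in Ioo (0:ℝ) 1, ENNReal.ofReal (min t z) * (ENNReal.ofReal z)⁻¹)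
            ∂(ν.restrict (Ioc (0:ℝ) 1)) := by
          refine lintegral_lintegral_swap (μ := volume.restrict (Ioo 0 1))
            (ν := ν.restrict (Ioc (0:ℝ) 1))
            (f := fun z t => ENNReal.ofReal (min t z) * (ENNReal.ofReal z)⁻¹) ?_
          exact (((measurable_snd.min measurable_fst).ennreal_ofReal).mul
            ((measurable_fst.ennreal_ofReal).inv)).aemeasurable
      _ = ∫⁻ t in Ioc (0:ℝ) 1, Gg t ∂ν := rfl
  have step2 : (∑' k : ℕ, Φ (k + 1) / ((k : ℝ≥0∞) + 1) ^ 2)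
      = ∫⁻ t in Ioc (0:ℝ) 1, Ff t ∂ν := by
    have hterm : ∀ k : ℕ, Φ (k + 1) / ((k : ℝ≥0∞) + 1) ^ 2 =
        ∫⁻ t in Ioc (0:ℝ) 1,
          ENNReal.ofReal ((1 - (1 - t) ^ (k+1)) / ((k:ℝ)+1)^2) ∂ν := by
      intro k
      have hc : (((k : ℝ≥0∞) + 1) ^ 2) = ENNReal.ofReal (((k:ℝ)+1)^2) := by
        rw [ENNReal.ofReal_pow (by positivity)]
        congr 1
        rw [show ((k:ℝ)+1) = ((k+1:ℕ):ℝ) from by push_cast; ring,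
          ENNReal.ofReal_natCast]
        push_cast; ring
      have hinvne : (ENNReal.ofReal (((k:ℝ)+1)^2))⁻¹ ≠ ⊤ :=
        ENNReal.inv_ne_top.2 (ENNReal.ofReal_pos.2 (by positivity)).ne'
      rw [hΦ (k+1), hc, div_eq_mul_inv, ← lintegral_mul_const' _ _ hinvne]
      refine lintegral_congr fun t => ?_
      rw [ENNReal.ofReal_div_of_pos (by positivity), div_eq_mul_inv]
    have hmeas : ∀ k : ℕ, Measurable fun t : ℝ =>
        ENNReal.ofReal ((1 - (1 - t) ^ (k+1)) / ((k:ℝ)+1)^2) := by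
      intro k
      exact ((measurable_const.sub
        ((measurable_const.sub measurable_id).pow_const _)).div_const _).ennreal_ofReal
    calc ∑' k : ℕ, Φ (k + 1) / ((k : ℝ≥0∞) + 1) ^ 2
        = ∑' k : ℕ, ∫⁻ t in Ioc (0:ℝ) 1,
            ENNReal.ofReal ((1 - (1 - t) ^ (k+1)) / ((k:ℝ)+1)^2) ∂ν :=
          tsum_congr hterm
      _ = ∫⁻ t in Ioc (0:ℝ) 1, (∑' k : ℕ,
            ENNReal.ofReal ((1 - (1 - t) ^ (k+1)) / ((k:ℝ)+1)^2)) ∂ν :=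
          (lintegral_tsum fun k => (hmeas k).aemeasurable).symm
      _ = ∫⁻ t in Ioc (0:ℝ) 1, Ff t ∂ν := rfl
  rw [step1, step2]
  have hBC : (∫⁻ t in Ioc (0:ℝ) 1, Ff t ∂ν) ≤ ∫⁻ t in Ioc (0:ℝ) 1, Ss t ∂ν :=
    setLIntegral_mono' measurableSet_Ioc fun t ht => FS ht
  have hAC : (∫⁻ t in Ioc (0:ℝ) 1, Gg t ∂ν) ≤ ∫⁻ t in Ioc (0:ℝ) 1, Ss t ∂ν :=
    setLIntegral_mono' measurableSet_Ioc fun t ht => GS ht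
  have hCB : (∫⁻ t in Ioc (0:ℝ) 1, Ss t ∂ν) ≤ 2 * ∫⁻ t in Ioc (0:ℝ) 1, Ff t ∂ν := by
    calc (∫⁻ t in Ioc (0:ℝ) 1, Ss t ∂ν)
        ≤ ∫⁻ t in Ioc (0:ℝ) 1, 2 * Ff t ∂ν :=
          setLIntegral_mono' measurableSet_Ioc fun t ht => SF ht
      _ = 2 * ∫⁻ t in Ioc (0:ℝ) 1, Ff t ∂ν := lintegral_const_mul' 2 _ (by norm_num)
  have hCA : (∫⁻ t in Ioc (0:ℝ) 1, Ss t ∂ν) ≤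
      (∫⁻ t in Ioc (0:ℝ) 1, Gg t ∂ν) + ∫⁻ t in Ioc (0:ℝ) 1, ENNReal.ofReal t ∂ν := by
    calc (∫⁻ t in Ioc (0:ℝ) 1, Ss t ∂ν)
        ≤ ∫⁻ t in Ioc (0:ℝ) 1, (Gg t + ENNReal.ofReal t) ∂ν :=
          setLIntegral_mono' measurableSet_Ioc fun t ht => SG ht
      _ = _ := lintegral_add_right _ measurable_id.ennreal_ofReal
  constructor
  · intro h
    exact lt_of_le_of_lt (hBC.trans hCA) (ENNReal.add_lt_top.2 ⟨h, hx⟩)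
  · intro h
    refine lt_of_le_of_lt (hAC.trans hCB) ?_
    exact ENNReal.mul_lt_top (by norm_num) h
end aux
end

section
/- Occupancy count comparison: Let (p_k)_{k≥1} be a probability mass function with values in (0,1) and define κ_{n,r} := C(n,r) Σ_{j≥1} p_j^r (1-p_j)^{n-r}. For fixed integers 1 ≤ r < s there exists a constant c > 0 (depending only on r and s) such that κ_{n,r} ≥ c κ_{2n,s} for all n ≥ s. -/
open Finset Set

set_option maxHeartbeats 1000000 in
/-- The pointwise comparison of binomial terms. -/
lemma occupancy_aux (r s n : ℕ) (hr : 1 ≤ r) (hrs : r < s) (hn : s ≤ n) {x : ℝ}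
    (hx0 : 0 < x) (hx1 : x < 1) :
    (s.factorial : ℝ) / (2 ^ s * (s - r).factorial * s ^ s * r.factorial) *
      (((2 * n).choose s : ℝ) * (x ^ s * (1 - x) ^ (2 * n - s))) ≤
    (n.choose r : ℝ) * (x ^ r * (1 - x) ^ (n - r)) := by
  set k := s - r with hkdef
  set m := n + r - s with hmdef
  have hk1 : 1 ≤ k := by omega
  have hks : s = r + k := by omega
  have hsplit : 2 * n - s = (n - r) + m := by omega
  have hm1 : 1 ≤ m := by omega
  have hs2 : 2 ≤ s := by omega
  have h1x : (0:ℝ) < 1 - x := by linarith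
  have hC2 : (0:ℝ) ≤ ((2 * n).choose s : ℝ) := by positivity
  -- `n ≤ s * m`
  have hnmN : n ≤ s * m := by
    have h1 : m + s = n + r := by omega
    nlinarith [hn, hr, hs2]
  have hnm : (n : ℝ) ≤ (s : ℝ) * m := by exact_mod_cast hnmN
  -- `n ≤ s * (n + 1 - r)`
  have hntN : n ≤ s * (n + 1 - r) := by
    have h1 : (n + 1 - r) + r = n + 1 := by omega
    nlinarith [hn, hrs, hs2]
  have hnt : (n : ℝ) ≤ (s : ℝ) * ((n + 1 - r : ℕ) : ℝ) := by exact_mod_cast hntN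
  have hmpos : (0:ℝ) < (m : ℝ) := by exact_mod_cast hm1
  have hnpos : (0:ℝ) < (n : ℝ) := by
    have : 0 < n := by omega
    exact_mod_cast this
  have hspos : (0:ℝ) < (s : ℝ) := by
    have : 0 < s := by omega
    exact_mod_cast this
  -- key analytic estimate: x^k (1-x)^m ≤ k! s^k / n^k
  have key : x ^ k * (1 - x) ^ m ≤ (k.factorial : ℝ) * s ^ k / n ^ k := by
    have hmx : (0:ℝ) < (m : ℝ) * x := by positivity
    have e1 : (1 - x) ^ m ≤ Real.exp (-((m : ℝ) * x)) := by
      calc (1 - x) ^ m ≤ (Real.exp (-x)) ^ m :=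
            pow_le_pow_left₀ h1x.le (Real.one_sub_le_exp_neg x) m
        _ = Real.exp (-((m : ℝ) * x)) := by
            rw [← Real.exp_nat_mul]; ring_nf
    have e2 : ((m : ℝ) * x) ^ k / k.factorial ≤ Real.exp ((m : ℝ) * x) :=
      Real.pow_div_factorial_le_exp ((m : ℝ) * x) hmx.le k
    have e3 : Real.exp (-((m : ℝ) * x)) ≤ (k.factorial : ℝ) / ((m : ℝ) * x) ^ k := by
      rw [Real.exp_neg]
      calc (Real.exp ((m : ℝ) * x))⁻¹ ≤ (((m : ℝ) * x) ^ k / k.factorial)⁻¹ :=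
            inv_anti₀ (by positivity) e2
        _ = (k.factorial : ℝ) / ((m : ℝ) * x) ^ k := inv_div _ _
    have e4 : x ^ k * (1 - x) ^ m ≤ (k.factorial : ℝ) / (m : ℝ) ^ k := by
      calc x ^ k * (1 - x) ^ m ≤ x ^ k * ((k.factorial : ℝ) / ((m : ℝ) * x) ^ k) := by
            have := e1.trans e3
            exact mul_le_mul_of_nonneg_left this (by positivity)
        _ = (k.factorial : ℝ) / (m : ℝ) ^ k := by
            rw [mul_pow]
            field_simp
    refine e4.trans ?_
    rw [div_le_div_iff₀ (by positivity) (by positivity)]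
    have hnk : (n : ℝ) ^ k ≤ ((s : ℝ) * m) ^ k := pow_le_pow_left₀ hnpos.le hnm k
    rw [mul_pow] at hnk
    nlinarith [hnk, (Nat.cast_pos (α := ℝ)).mpr k.factorial_pos, pow_pos hmpos k,
      pow_nonneg (Nat.cast_nonneg (α := ℝ) s) k]
  -- combinatorial bounds
  have h2 : (s.factorial : ℝ) * ((2 * n).choose s : ℝ) ≤ (2 : ℝ) ^ s * (n : ℝ) ^ s := by
    have hN : s.factorial * (2 * n).choose s ≤ (2 * n) ^ s := by
      rw [← Nat.descFactorial_eq_factorial_mul_choose]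
      exact Nat.descFactorial_le_pow _ _
    calc (s.factorial : ℝ) * ((2 * n).choose s : ℝ) ≤ ((2 * n : ℕ) : ℝ) ^ s := by
          exact_mod_cast hN
      _ = (2 : ℝ) ^ s * (n : ℝ) ^ s := by push_cast; rw [mul_pow]
  have h3 : (n : ℝ) ^ r ≤ (s : ℝ) ^ r * r.factorial * (n.choose r : ℝ) := by
    have hpc : (((n + 1 - r : ℕ) : ℝ)) ^ r / r.factorial ≤ (n.choose r : ℝ) := by
      exact_mod_cast Nat.pow_le_choose r n (α := ℝ)
    have h1 : (n : ℝ) ^ r ≤ ((s : ℝ) * ((n + 1 - r : ℕ) : ℝ)) ^ r :=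
      pow_le_pow_left₀ hnpos.le hnt r
    rw [mul_pow] at h1
    refine h1.trans ?_
    rw [div_le_iff₀ (by positivity : (0:ℝ) < (r.factorial : ℝ))] at hpc
    nlinarith [hpc, pow_nonneg (Nat.cast_nonneg (α := ℝ) s) r]
  -- assemble
  have hP : (0:ℝ) < x ^ r * (1 - x) ^ (n - r) := by positivity
  have main : (s.factorial : ℝ) / (2 ^ s * k.factorial * s ^ s * r.factorial) *
      ((2 * n).choose s : ℝ) * (x ^ k * (1 - x) ^ m) ≤ (n.choose r : ℝ) := by
    have step1 : (s.factorial : ℝ) / (2 ^ s * k.factorial * s ^ s * r.factorial) *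
        ((2 * n).choose s : ℝ) * (x ^ k * (1 - x) ^ m) ≤
        (s.factorial : ℝ) / (2 ^ s * k.factorial * s ^ s * r.factorial) *
        ((2 * n).choose s : ℝ) * ((k.factorial : ℝ) * s ^ k / n ^ k) := by
      have hc : (0:ℝ) ≤ (s.factorial : ℝ) / (2 ^ s * k.factorial * s ^ s * r.factorial) *
          ((2 * n).choose s : ℝ) := by positivity
      exact mul_le_mul_of_nonneg_left key hc
    refine step1.trans ?_
    have hden : (0:ℝ) < (2:ℝ) ^ s * k.factorial * s ^ s * r.factorial * n ^ k := by positivity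
    rw [show (s.factorial : ℝ) / (2 ^ s * k.factorial * s ^ s * r.factorial) *
        ((2 * n).choose s : ℝ) * ((k.factorial : ℝ) * s ^ k / n ^ k) =
        (s.factorial : ℝ) * ((2 * n).choose s : ℝ) * ((k.factorial : ℝ) * s ^ k) /
        ((2:ℝ) ^ s * k.factorial * s ^ s * r.factorial * n ^ k) from by
      field_simp
      try ring]
    rw [div_le_iff₀ hden]
    have A : (s.factorial : ℝ) * ((2 * n).choose s : ℝ) * (s : ℝ) ^ k ≤
        (2:ℝ) ^ s * n ^ s * s ^ k :=
      mul_le_mul_of_nonneg_right h2 (by positivity)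
    have hns : (n:ℝ) ^ s = (n:ℝ) ^ r * (n:ℝ) ^ k := by rw [← pow_add, ← hks]
    have hss : (s:ℝ) ^ s = (s:ℝ) ^ r * (s:ℝ) ^ k := by rw [← pow_add, ← hks]
    have B : (2:ℝ) ^ s * (n:ℝ) ^ s * s ^ k ≤
        (n.choose r : ℝ) * ((2:ℝ) ^ s * s ^ s * r.factorial) * n ^ k := by
      have h4 : (2:ℝ) ^ s * n ^ k * s ^ k * (n:ℝ) ^ r ≤
          (2:ℝ) ^ s * n ^ k * s ^ k * ((s : ℝ) ^ r * r.factorial * (n.choose r : ℝ)) :=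
        mul_le_mul_of_nonneg_left h3 (by positivity)
      calc (2:ℝ) ^ s * (n:ℝ) ^ s * s ^ k
          = (2:ℝ) ^ s * n ^ k * s ^ k * (n:ℝ) ^ r := by
            rw [hns]; ring
        _ ≤ (2:ℝ) ^ s * n ^ k * s ^ k * ((s : ℝ) ^ r * r.factorial * (n.choose r : ℝ)) := h4
        _ = (n.choose r : ℝ) * ((2:ℝ) ^ s * s ^ s * r.factorial) * n ^ k := by
            rw [hss]; ring
    have AB := A.trans B
    calc (s.factorial : ℝ) * ((2 * n).choose s : ℝ) * ((k.factorial : ℝ) * s ^ k)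
        = ((s.factorial : ℝ) * ((2 * n).choose s : ℝ) * (s : ℝ) ^ k) * k.factorial := by
          ring
      _ ≤ ((n.choose r : ℝ) * ((2:ℝ) ^ s * s ^ s * r.factorial) * n ^ k) * k.factorial :=
          mul_le_mul_of_nonneg_right AB (Nat.cast_nonneg _)
      _ = (n.choose r : ℝ) * ((2:ℝ) ^ s * k.factorial * s ^ s * r.factorial * n ^ k) := by
          ring
  calc (s.factorial : ℝ) / (2 ^ s * k.factorial * s ^ s * r.factorial) *
        (((2 * n).choose s : ℝ) * (x ^ s * (1 - x) ^ (2 * n - s)))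
      = ((s.factorial : ℝ) / (2 ^ s * k.factorial * s ^ s * r.factorial) *
        ((2 * n).choose s : ℝ) * (x ^ k * (1 - x) ^ m)) * (x ^ r * (1 - x) ^ (n - r)) := by
        have hxs : x ^ s = x ^ r * x ^ k := by rw [← pow_add, ← hks]
        rw [hsplit, pow_add, hxs]; ring
    _ ≤ (n.choose r : ℝ) * (x ^ r * (1 - x) ^ (n - r)) :=
        mul_le_mul_of_nonneg_right main hP.le

/-- Occupancy count comparison: for a probability mass function `(p j)` with
values in `(0,1)` and `κ n r := C(n,r) ∑_j p_j^r (1-p_j)^(n-r)`, for fixed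
`1 ≤ r < s` there is a constant `c > 0` (depending only on `r`, `s`) with
`κ n r ≥ c * κ (2n) s` for all `n ≥ s`. -/
theorem occupancy_count_comparison
    (r s : ℕ) (hr : 1 ≤ r) (hrs : r < s) :
    ∃ c : ℝ, 0 < c ∧
      ∀ (p : ℕ → ℝ), (∀ j, p j ∈ Ioo (0:ℝ) 1) → (∑' j : ℕ, p j) = 1 →
      ∀ (κ : ℕ → ℕ → ℝ),
        (∀ n m, κ n m = (n.choose m : ℝ) * ∑' j : ℕ, p j ^ m * (1 - p j) ^ (n - m)) →
        ∀ n, s ≤ n → c * κ (2 * n) s ≤ κ n r := by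
  have hspos : (0:ℝ) < (s : ℝ) := by
    have : 0 < s := by omega
    exact_mod_cast this
  refine ⟨(s.factorial : ℝ) / (2 ^ s * (s - r).factorial * s ^ s * r.factorial),
    div_pos (by exact_mod_cast s.factorial_pos)
      (mul_pos (mul_pos (mul_pos (by positivity)
        (by exact_mod_cast (s - r).factorial_pos)) (pow_pos hspos s))
        (by exact_mod_cast r.factorial_pos)), ?_⟩
  intro p hp hsum κ hκ n hn
  have hSp : Summable p := by
    by_contra h
    rw [tsum_eq_zero_of_not_summable h] at hsum
    norm_num at hsum
  have hbound : ∀ (m t : ℕ), 1 ≤ m → Summable (fun j => p j ^ m * (1 - p j) ^ t) := by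
    intro m t hm
    refine hSp.of_nonneg_of_le (fun j => ?_) (fun j => ?_)
    · have h1 := (hp j).1
      have h2 := (hp j).2
      have : (0:ℝ) ≤ 1 - p j := by linarith
      positivity
    · have h1 := (hp j).1
      have h2 := (hp j).2
      have h3 : p j ^ m ≤ p j := pow_le_of_le_one h1.le h2.le (by omega)
      have h4 : (1 - p j) ^ t ≤ 1 := pow_le_one₀ (by linarith) (by linarith)
      calc p j ^ m * (1 - p j) ^ t ≤ p j * 1 :=
            mul_le_mul h3 h4 (pow_nonneg (by linarith) t) h1.le
        _ = p j := by ring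
  have hS1 : Summable (fun j => p j ^ r * (1 - p j) ^ (n - r)) := hbound r (n - r) hr
  have hS2 : Summable (fun j => p j ^ s * (1 - p j) ^ (2 * n - s)) :=
    hbound s (2 * n - s) (by omega)
  rw [hκ, hκ]
  set c : ℝ := (s.factorial : ℝ) / (2 ^ s * (s - r).factorial * s ^ s * r.factorial) with hc
  calc c * (((2 * n).choose s : ℝ) * ∑' j, p j ^ s * (1 - p j) ^ (2 * n - s))
      = ∑' j, c * (((2 * n).choose s : ℝ) * (p j ^ s * (1 - p j) ^ (2 * n - s))) := by
        rw [tsum_mul_left, tsum_mul_left]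
    _ ≤ ∑' j, ((n.choose r : ℝ) * (p j ^ r * (1 - p j) ^ (n - r))) := by
        refine Summable.tsum_le_tsum (fun j => ?_) ((hS2.mul_left _).mul_left _) (hS1.mul_left _)
        exact occupancy_aux r s n hr hrs hn (hp j).1 (hp j).2
    _ = (n.choose r : ℝ) * ∑' j, p j ^ r * (1 - p j) ^ (n - r) := tsum_mul_left
end

section
/- For the beta(a,b) measure with 1 < a < 2, ν(dx) = (1/B(a,b)) x^{a-3}(1-x)^{b-1} dx, the first moment of the subordinator is m = E S_1 = ∫₀¹ |log(1-x)| ν(dx) = ((a+b-1)/((a-1)(2-a))) (1 − (a+b-2)(Ψ(a+b-1) − Ψ(b))), where Ψ is the digamma function. -/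
open MeasureTheory Set Real

namespace BetaCoalescentAux
open Filter Metric


lemma betaInt (u v : ℝ) (hu : 0 < u) (hv : 0 < v) :
    IntegrableOn (fun x : ℝ => x ^ (u - 1) * (1 - x) ^ (v - 1)) (Ioo 0 1) := by
  have hc := (Complex.betaIntegral_convergent (u := u) (v := v)
    (by simpa using hu) (by simpa using hv)).norm
  have h1 : IntegrableOn (fun x : ℝ => ‖(x : ℂ) ^ ((u : ℂ) - 1) * (1 - (x : ℂ)) ^ ((v : ℂ) - 1)‖)
      (Ioo 0 1) := by
    have := (intervalIntegrable_iff_integrableOn_Ioc_of_le (by norm_num : (0:ℝ) ≤ 1)).mp hc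
    exact this.mono_set Ioo_subset_Ioc_self
  refine h1.congr_fun (fun x hx => ?_) measurableSet_Ioo
  have hx0 : (0:ℝ) < x := hx.1
  have hx1 : (0:ℝ) < 1 - x := by linarith [hx.2]
  beta_reduce
  rw [norm_mul]
  congr 1
  · rw [Complex.norm_cpow_eq_rpow_re_of_pos hx0]
    norm_num
  · rw [show (1 : ℂ) - (x:ℂ) = ((1 - x : ℝ) : ℂ) by push_cast; ring,
      Complex.norm_cpow_eq_rpow_re_of_pos hx1]
    norm_num


lemma neglog_bound {v : ℝ} (hv : 0 < v) {x : ℝ} (hx : x ∈ Ioo (0:ℝ) 1) :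
    -Real.log (1 - x) ≤ (2 + 4 / v) * (x * (1 - x) ^ (-(v/2))) := by
  obtain ⟨hx0, hx1⟩ := hx
  have h1x : (0:ℝ) < 1 - x := by linarith
  have h4v : (0:ℝ) < 4 / v := by positivity
  have h2v : (0:ℝ) < 2 / v := by positivity
  have hpow1 : (1:ℝ) ≤ (1 - x) ^ (-(v/2)) :=
    Real.one_le_rpow_of_pos_of_le_one_of_nonpos h1x (by linarith) (by linarith [hv])
  have hp : (0:ℝ) < (1 - x) ^ (-(v/2)) := by positivity
  rcases le_or_gt x (1/2) with h | h
  · have h2 : -Real.log (1 - x) ≤ (1 - x)⁻¹ - 1 := by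
      have := Real.log_le_sub_one_of_pos (x := (1 - x)⁻¹) (by positivity)
      rwa [Real.log_inv] at this
    have heq : (1 - x)⁻¹ - 1 = x * (1 - x)⁻¹ := by field_simp; ring
    have h3 : x * (1 - x)⁻¹ ≤ 2 * x := by
      rw [mul_comm 2 x]
      apply mul_le_mul_of_nonneg_left _ hx0.le
      rw [inv_le_comm₀ h1x (by norm_num)]
      linarith
    have h4 : 2 * x ≤ (2 + 4/v) * (x * (1 - x) ^ (-(v/2))) := by
      have key : 2 * x ≤ 2 * (x * (1 - x) ^ (-(v/2))) := by
        apply mul_le_mul_of_nonneg_left _ (by norm_num)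
        nlinarith [mul_le_mul_of_nonneg_left hpow1 hx0.le]
      have : 2 * (x * (1 - x) ^ (-(v/2))) ≤ (2 + 4/v) * (x * (1 - x) ^ (-(v/2))) := by
        apply mul_le_mul_of_nonneg_right (by linarith) (by positivity)
      linarith
    linarith [h2, heq ▸ h2]
  · have h2 : -Real.log (1 - x) ≤ (1 - x) ^ (-(v/2)) * (2 / v) := by
      have hlog := Real.log_le_rpow_div (x := (1 - x)⁻¹) (by positivity) (ε := v/2) (by positivity)
      rw [Real.log_inv] at hlog
      have heq : ((1-x)⁻¹) ^ (v/2) / (v/2) = (1 - x) ^ (-(v/2)) * (2 / v) := by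
        rw [Real.inv_rpow h1x.le, ← Real.rpow_neg h1x.le, div_eq_mul_inv, inv_div]
      linarith [heq ▸ hlog]
    have key : (1/2) * ((1 - x) ^ (-(v/2))) ≤ x * (1 - x) ^ (-(v/2)) :=
      mul_le_mul_of_nonneg_right h.le hp.le
    have hc : (0:ℝ) ≤ 2 + 4/v := by linarith
    have h42 : (4:ℝ)/v = 2*(2/v) := by ring
    nlinarith [mul_le_mul_of_nonneg_left key hc, hp]


lemma betaIntLog (w v : ℝ) (hw : -2 < w) (hv : 0 < v) :
    IntegrableOn (fun x : ℝ => x ^ w * (1 - x) ^ (v - 1) * |Real.log (1 - x)|) (Ioo 0 1) := by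
  have hg : IntegrableOn
      (fun x : ℝ => (2 + 4 / v) * (x ^ (w + 2 - 1) * (1 - x) ^ (v / 2 - 1))) (Ioo 0 1) :=
    (betaInt (w + 2) (v / 2) (by linarith) (by linarith)).const_mul _
  have hmeas : AEStronglyMeasurable
      (fun x : ℝ => x ^ w * (1 - x) ^ (v - 1) * |Real.log (1 - x)|)
      (volume.restrict (Ioo (0:ℝ) 1)) := by
    have m1 : Measurable fun x : ℝ => x ^ w * (1 - x) ^ (v - 1) := by fun_prop
    exact (m1.mul
      ((Real.measurable_log.comp (measurable_const.sub measurable_id)).abs)).aestronglyMeasurable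
  refine hg.integrable.mono hmeas ?_
  filter_upwards [ae_restrict_mem measurableSet_Ioo] with x hx
  obtain ⟨hx0, hx1⟩ := hx
  have h1x : (0:ℝ) < 1 - x := by linarith
  have hlogabs : |Real.log (1 - x)| = -Real.log (1 - x) := by
    rw [abs_of_nonpos (Real.log_nonpos (by linarith) (by linarith))]
  rw [Real.norm_eq_abs, Real.norm_eq_abs]
  have hfnn : 0 ≤ x ^ w * (1 - x) ^ (v - 1) * |Real.log (1 - x)| := by positivity
  rw [abs_of_nonneg hfnn]
  have hbd := neglog_bound hv ⟨hx0, hx1⟩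
  have key : x ^ w * (1 - x) ^ (v - 1) * |Real.log (1 - x)|
      ≤ (2 + 4 / v) * (x ^ (w + 2 - 1) * (1 - x) ^ (v / 2 - 1)) := by
    rw [hlogabs]
    calc x ^ w * (1 - x) ^ (v - 1) * -Real.log (1 - x)
        ≤ x ^ w * (1 - x) ^ (v - 1) * ((2 + 4 / v) * (x * (1 - x) ^ (-(v/2)))) := by
          apply mul_le_mul_of_nonneg_left hbd (by positivity)
      _ = (2 + 4 / v) * (x ^ (w + 2 - 1) * (1 - x) ^ (v / 2 - 1)) := by
          rw [show w + 2 - 1 = w + 1 by ring, Real.rpow_add_one hx0.ne',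
            show v / 2 - 1 = (v - 1) + (-(v/2)) by ring, Real.rpow_add h1x]
          ring
  exact key.trans (le_abs_self _)


lemma betaEval (u v : ℝ) (hu : 0 < u) (hv : 0 < v) :
    ∫ x in Ioo (0:ℝ) 1, x ^ (u - 1) * (1 - x) ^ (v - 1)
      = Real.Gamma u * Real.Gamma v / Real.Gamma (u + v) := by
  set I : ℝ := ∫ x in Ioo (0:ℝ) 1, x ^ (u - 1) * (1 - x) ^ (v - 1) with hI
  have key := Complex.Gamma_mul_Gamma_eq_betaIntegral (s := u) (t := v)
    (by simpa using hu) (by simpa using hv)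
  have hcongr : Complex.betaIntegral u v = (I : ℂ) := by
    rw [Complex.betaIntegral, hI]
    rw [show (∫ x in Ioo (0:ℝ) 1, x ^ (u - 1) * (1 - x) ^ (v - 1))
        = ∫ x in (0:ℝ)..1, x ^ (u - 1) * (1 - x) ^ (v - 1) by
      rw [intervalIntegral.integral_of_le (by norm_num), integral_Ioc_eq_integral_Ioo]]
    rw [← intervalIntegral.integral_ofReal]
    apply intervalIntegral.integral_congr_ae
    refine Filter.Eventually.of_forall fun x hx => ?_
    rw [uIoc_of_le (by norm_num : (0:ℝ) ≤ 1)] at hx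
    have hx0 : (0:ℝ) ≤ x := hx.1.le
    have hx1 : (0:ℝ) ≤ 1 - x := by linarith [hx.2]
    rw [Complex.ofReal_mul, Complex.ofReal_cpow hx0, Complex.ofReal_cpow hx1]
    push_cast
    ring
  rw [hcongr, Complex.Gamma_ofReal, Complex.Gamma_ofReal,
    show (u : ℂ) + (v : ℂ) = ((u + v : ℝ) : ℂ) by push_cast; ring,
    Complex.Gamma_ofReal, ← Complex.ofReal_mul, ← Complex.ofReal_mul,
    Complex.ofReal_inj] at key
  have hne : Real.Gamma (u + v) ≠ 0 := (Real.Gamma_pos_of_pos (by linarith)).ne'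
  field_simp [key]
  linarith [key]


lemma hasDerivBeta (u v : ℝ) (hu : 0 < u) (hv : 0 < v) :
    HasDerivAt (fun t => ∫ x in Ioo (0:ℝ) 1, x ^ (u - 1) * (1 - x) ^ (t - 1))
      (∫ x in Ioo (0:ℝ) 1, x ^ (u - 1) * (1 - x) ^ (v - 1) * Real.log (1 - x)) v := by
  have hmeaslog : AEStronglyMeasurable
      (fun x : ℝ => x ^ (u - 1) * (1 - x) ^ (v - 1) * Real.log (1 - x))
      (volume.restrict (Ioo (0:ℝ) 1)) := by
    have m1 : Measurable fun x : ℝ => x ^ (u - 1) * (1 - x) ^ (v - 1) := by fun_prop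
    exact (m1.mul (Real.measurable_log.comp (measurable_const.sub measurable_id))).aestronglyMeasurable
  have := hasDerivAt_integral_of_dominated_loc_of_deriv_le (μ := volume.restrict (Ioo (0:ℝ) 1))
    (F := fun t x => x ^ (u - 1) * (1 - x) ^ (t - 1))
    (F' := fun t x => x ^ (u - 1) * (1 - x) ^ (t - 1) * Real.log (1 - x))
    (x₀ := v)
    (bound := fun x => x ^ (u - 1) * (1 - x) ^ (v / 2 - 1) * |Real.log (1 - x)|)
    (s := ball v (v / 2)) (ball_mem_nhds v (by positivity))
    (Filter.Eventually.of_forall fun t =>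
      (by fun_prop : Measurable fun x : ℝ => x ^ (u - 1) * (1 - x) ^ (t - 1)).aestronglyMeasurable)
    (betaInt u v hu hv)
    hmeaslog
    ?_ -- bound
    (betaIntLog (u - 1) (v / 2) (by linarith) (by positivity))
    ?_ -- diff
  · exact this.2
  · -- bound
    filter_upwards [ae_restrict_mem measurableSet_Ioo] with x hx t ht
    obtain ⟨hx0, hx1⟩ := hx
    have h1x : (0:ℝ) < 1 - x := by linarith
    rw [mem_ball, Real.dist_eq] at ht
    have ht2 : v / 2 - 1 ≤ t - 1 := by
      have := abs_lt.mp ht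
      linarith [this.1]
    have hle : (1 - x) ^ (t - 1) ≤ (1 - x) ^ (v / 2 - 1) :=
      Real.rpow_le_rpow_of_exponent_ge h1x (by linarith) ht2
    rw [Real.norm_eq_abs, abs_mul, abs_mul, abs_of_nonneg (Real.rpow_nonneg hx0.le _),
      abs_of_nonneg (Real.rpow_nonneg h1x.le _)]
    have : x ^ (u-1) * (1 - x) ^ (t - 1) * |Real.log (1 - x)|
        ≤ x ^ (u-1) * (1 - x) ^ (v/2 - 1) * |Real.log (1 - x)| := by
      apply mul_le_mul_of_nonneg_right _ (abs_nonneg _)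
      exact mul_le_mul_of_nonneg_left hle (Real.rpow_nonneg hx0.le _)
    exact this
  · -- diff
    filter_upwards [ae_restrict_mem measurableSet_Ioo] with x hx t ht
    obtain ⟨hx0, hx1⟩ := hx
    have h1x : (0:ℝ) < 1 - x := by linarith
    have hbase : HasDerivAt (fun s : ℝ => (1 - x) ^ (s - 1))
        ((1 - x) ^ (t - 1) * Real.log (1 - x)) t := by
      have h1 : HasDerivAt (fun s : ℝ => Real.exp ((s - 1) * Real.log (1 - x)))
          (Real.exp ((t - 1) * Real.log (1 - x)) * Real.log (1 - x)) t := by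
        have := (((hasDerivAt_id t).sub_const 1).mul_const (Real.log (1 - x))).exp
        simpa using this
      have heq : (fun s : ℝ => (1 - x) ^ (s - 1))
          = fun s : ℝ => Real.exp ((s - 1) * Real.log (1 - x)) := by
        funext s
        rw [Real.rpow_def_of_pos h1x, mul_comm]
      rw [heq, Real.rpow_def_of_pos h1x, mul_comm (Real.log (1-x)) (t-1)]
      exact h1
    have := hbase.const_mul (x ^ (u - 1))
    convert this using 1
    · rfl
    ring


lemma gammaDiff {s : ℝ} (hs : 0 < s) : HasDerivAt Real.Gamma (deriv Real.Gamma s) s := by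
  refine (Real.differentiableAt_Gamma fun m => ?_).hasDerivAt
  have : (0:ℝ) ≤ m := Nat.cast_nonneg m
  intro h; rw [h] at hs; linarith

lemma betaLogEval (u v : ℝ) (hu : 0 < u) (hv : 0 < v) :
    ∫ x in Ioo (0:ℝ) 1, x ^ (u - 1) * (1 - x) ^ (v - 1) * Real.log (1 - x)
      = (Real.Gamma u * Real.Gamma v / Real.Gamma (u + v)) *
          (deriv Real.Gamma v / Real.Gamma v
            - deriv Real.Gamma (u + v) / Real.Gamma (u + v)) := by
  have hΓv : (0:ℝ) < Real.Gamma v := Real.Gamma_pos_of_pos hv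
  have hΓuv : (0:ℝ) < Real.Gamma (u + v) := Real.Gamma_pos_of_pos (by linarith)
  have hH : HasDerivAt (fun t => Real.Gamma u * Real.Gamma t / Real.Gamma (u + t))
      ((Real.Gamma u * deriv Real.Gamma v * Real.Gamma (u + v)
        - Real.Gamma u * Real.Gamma v * deriv Real.Gamma (u + v)) / Real.Gamma (u + v) ^ 2) v := by
    have h1 : HasDerivAt (fun t : ℝ => Real.Gamma u * Real.Gamma t)
        (Real.Gamma u * deriv Real.Gamma v) v := (gammaDiff hv).const_mul _
    have h2 : HasDerivAt (fun t : ℝ => Real.Gamma (u + t)) (deriv Real.Gamma (u + v)) v := by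
      have := (gammaDiff (by linarith : (0:ℝ) < u + v)).comp v
        ((hasDerivAt_id v).const_add u)
      simpa [Function.comp_def] using this
    exact h1.div h2 hΓuv.ne'
  have hG : HasDerivAt (fun t => Real.Gamma u * Real.Gamma t / Real.Gamma (u + t))
      (∫ x in Ioo (0:ℝ) 1, x ^ (u - 1) * (1 - x) ^ (v - 1) * Real.log (1 - x)) v := by
    refine (hasDerivBeta u v hu hv).congr_of_eventuallyEq ?_
    filter_upwards [eventually_gt_nhds hv] with t ht
    exact (betaEval u t hu ht).symm
  rw [hG.unique hH]
  field_simp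


lemma keyFTC (p b : ℝ) (hp1 : -1 < p) (hp0 : p < 0) (hb : 0 < b) :
    p * ∫ x in Ioo (0:ℝ) 1, x ^ (p - 1) * (1 - x) ^ (b - 1) * (-Real.log (1 - x))
      = (p + b) * (∫ x in Ioo (0:ℝ) 1, x ^ p * (1 - x) ^ (b - 1) * (-Real.log (1 - x)))
        - ∫ x in Ioo (0:ℝ) 1, x ^ p * (1 - x) ^ (b - 1) := by
  set g1 : ℝ → ℝ := fun x => x ^ (p - 1) * (1 - x) ^ (b - 1) * (-Real.log (1 - x)) with hg1
  set g2 : ℝ → ℝ := fun x => x ^ p * (1 - x) ^ (b - 1) * (-Real.log (1 - x)) with hg2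
  set g3 : ℝ → ℝ := fun x => x ^ p * (1 - x) ^ (b - 1) with hg3
  set f' : ℝ → ℝ := fun x => p * (g1 x - g2 x) + (g3 x - b * g2 x) with hf'
  set F : ℝ → ℝ := fun x => x ^ p * (1 - x) ^ b * (-Real.log (1 - x)) with hF
  have habs : ∀ x ∈ Ioo (0:ℝ) 1, |Real.log (1 - x)| = -Real.log (1 - x) := fun x hx => by
    rw [abs_of_nonpos (Real.log_nonpos (by linarith [hx.2]) (by linarith [hx.1]))]
  have ig1 : IntegrableOn g1 (Ioo (0:ℝ) 1) :=
    (betaIntLog (p - 1) b (by linarith) hb).congr_fun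
      (fun x hx => by beta_reduce; rw [habs x hx]) measurableSet_Ioo
  have ig2 : IntegrableOn g2 (Ioo (0:ℝ) 1) :=
    (betaIntLog p b (by linarith) hb).congr_fun
      (fun x hx => by beta_reduce; rw [habs x hx]) measurableSet_Ioo
  have ig3 : IntegrableOn g3 (Ioo (0:ℝ) 1) := by
    have := betaInt (p + 1) b (by linarith) hb
    simpa using this
  have igf : IntegrableOn f' (Ioo (0:ℝ) 1) :=
    ((ig1.sub ig2).const_mul p).add (ig3.sub (ig2.const_mul b))
  -- derivative
  have hderiv : ∀ x ∈ Ioo (0:ℝ) 1, HasDerivAt F (f' x) x := by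
    intro x hx
    obtain ⟨hx0, hx1⟩ := hx
    have h1x : (0:ℝ) < 1 - x := by linarith
    have h1 : HasDerivAt (fun x : ℝ => x ^ p) (p * x ^ (p - 1)) x :=
      Real.hasDerivAt_rpow_const (Or.inl hx0.ne')
    have hsub : HasDerivAt (fun x : ℝ => 1 - x) (-1) x := by
      simpa using (hasDerivAt_id x).const_sub (1:ℝ)
    have h2 : HasDerivAt (fun x : ℝ => (1 - x) ^ b) (b * (1 - x) ^ (b - 1) * (-1)) x :=
      (Real.hasDerivAt_rpow_const (p := b) (Or.inl h1x.ne')).comp x hsub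
    have h3 : HasDerivAt (fun x : ℝ => -Real.log (1 - x)) ((1 - x)⁻¹) x := by
      have := ((Real.hasDerivAt_log h1x.ne').comp x hsub).neg
      simpa [Function.comp_def, Pi.neg_def] using this
    have hmul := (h1.mul h2).mul h3
    convert hmul using 1
    · rfl
    · rfl
    · rfl
    have e1 : (1 - x) ^ b = (1 - x) ^ (b - 1) * (1 - x) := by
      rw [← Real.rpow_add_one h1x.ne' (b - 1)]; ring_nf
    have e2 : x ^ p = x ^ (p - 1) * x := by
      rw [← Real.rpow_add_one hx0.ne' (p - 1)]; ring_nf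
    simp only [hf', hg1, hg2, hg3, Pi.mul_apply]
    rw [e1, e2]
    field_simp
    ring
  -- limit at 0
  have hlim0 : Tendsto F (nhdsWithin 0 (Ioi 0)) (nhds 0) := by
    have t1 : Tendsto (fun x : ℝ => x ^ (p + 1)) (nhdsWithin 0 (Ioi 0)) (nhds 0) := by
      have hc : ContinuousAt (fun x : ℝ => x ^ (p + 1)) 0 :=
        Real.continuousAt_rpow_const 0 (p + 1) (Or.inr (by linarith))
      have := hc.tendsto.mono_left (nhdsWithin_le_nhds (s := Ioi (0:ℝ)))
      rwa [Real.zero_rpow (by linarith : p + 1 ≠ 0)] at this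
    have t2 : Tendsto (fun x : ℝ => (1 - x) ^ b) (nhdsWithin 0 (Ioi 0)) (nhds 1) := by
      have hc : ContinuousAt (fun x : ℝ => (1 - x) ^ b) 0 := by
        apply ContinuousAt.rpow_const
        · fun_prop
        · left; norm_num
      have := hc.tendsto.mono_left (nhdsWithin_le_nhds (s := Ioi (0:ℝ)))
      simpa using this
    have t3 : Tendsto (fun x : ℝ => -Real.log (1 - x) / x) (nhdsWithin 0 (Ioi 0)) (nhds 1) := by
      have hd : HasDerivAt (fun x : ℝ => -Real.log (1 - x)) 1 0 := by
        have hsub : HasDerivAt (fun x : ℝ => 1 - x) (-1) (0:ℝ) := by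
          simpa using (hasDerivAt_id (0:ℝ)).const_sub (1:ℝ)
        have := ((Real.hasDerivAt_log (by norm_num : (1:ℝ) - 0 ≠ 0)).comp (0:ℝ) hsub).neg
        norm_num at this
        exact this
      have := hasDerivAt_iff_tendsto_slope.mp hd
      have h2 := this.mono_left (nhdsWithin_mono 0 (fun x hx => by
        simp only [mem_compl_iff, mem_singleton_iff]
        exact ne_of_gt hx))
      apply h2.congr
      intro x
      simp [slope_def_field]
    have hprod : Tendsto (fun x : ℝ => x ^ (p + 1) * (1 - x) ^ b * (-Real.log (1 - x) / x))
        (nhdsWithin 0 (Ioi 0)) (nhds 0) := by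
      have := (t1.mul t2).mul t3
      simpa using this
    apply hprod.congr'
    filter_upwards [self_mem_nhdsWithin] with x hx
    have hx0 : (0:ℝ) < x := hx
    rw [hF]
    rw [Real.rpow_add_one hx0.ne' p]
    field_simp
  -- limit at 1
  have hlim1 : Tendsto F (nhdsWithin 1 (Iio 1)) (nhds 0) := by
    have t1 : Tendsto (fun x : ℝ => x ^ p) (nhdsWithin 1 (Iio 1)) (nhds 1) := by
      have hc : ContinuousAt (fun x : ℝ => x ^ p) 1 :=
        Real.continuousAt_rpow_const 1 p (Or.inl one_ne_zero)
      have := hc.tendsto.mono_left (nhdsWithin_le_nhds (s := Iio (1:ℝ)))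
      rwa [Real.one_rpow] at this
    have hy : Tendsto (fun x : ℝ => 1 - x) (nhdsWithin 1 (Iio 1)) (nhdsWithin 0 (Ioi 0)) := by
      apply tendsto_nhdsWithin_of_tendsto_nhds_of_eventually_within
      · have hct : ContinuousAt (fun x : ℝ => 1 - x) 1 := by fun_prop
        have := hct.tendsto.mono_left (nhdsWithin_le_nhds (s := Iio (1:ℝ)))
        simpa using this
      · filter_upwards [self_mem_nhdsWithin] with x hx
        simp only [mem_Iio] at hx
        simp only [mem_Ioi]
        linarith
    have t2 : Tendsto (fun x : ℝ => Real.log (1 - x) * (1 - x) ^ b)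
        (nhdsWithin 1 (Iio 1)) (nhds 0) :=
      (tendsto_log_mul_rpow_nhdsGT_zero hb).comp hy
    have hprod : Tendsto (fun x : ℝ => x ^ p * -(Real.log (1 - x) * (1 - x) ^ b))
        (nhdsWithin 1 (Iio 1)) (nhds 0) := by
      have := t1.mul t2.neg
      simpa using this
    apply hprod.congr
    intro x
    rw [hF]; ring
  -- FTC
  have hFTC : ∫ x in (0:ℝ)..1, f' x = 0 - 0 :=
    intervalIntegral.integral_eq_sub_of_hasDerivAt_of_tendsto (by norm_num) hderiv
      ((intervalIntegrable_iff_integrableOn_Ioc_of_le (by norm_num)).mpr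
        (igf.congr_set_ae Ioo_ae_eq_Ioc.symm))
      hlim0 hlim1
  rw [intervalIntegral.integral_of_le (by norm_num), integral_Ioc_eq_integral_Ioo] at hFTC
  have hsplit : ∫ x in Ioo (0:ℝ) 1, f' x
      = p * ((∫ x in Ioo (0:ℝ) 1, g1 x) - ∫ x in Ioo (0:ℝ) 1, g2 x)
        + ((∫ x in Ioo (0:ℝ) 1, g3 x) - b * ∫ x in Ioo (0:ℝ) 1, g2 x) := by
    have iA : IntegrableOn (fun x => p * (g1 x - g2 x)) (Ioo (0:ℝ) 1) := by
      have := (ig1.sub ig2).const_mul p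
      exact this
    have iB : IntegrableOn (fun x => g3 x - b * g2 x) (Ioo (0:ℝ) 1) :=
      ig3.sub (ig2.const_mul b)
    rw [show (∫ x in Ioo (0:ℝ) 1, f' x)
        = ∫ x in Ioo (0:ℝ) 1, (p * (g1 x - g2 x) + (g3 x - b * g2 x)) from rfl]
    rw [integral_add iA iB]
    rw [MeasureTheory.integral_const_mul, integral_sub ig1 ig2,
      integral_sub ig3 (ig2.const_mul b), MeasureTheory.integral_const_mul]
  rw [hsplit] at hFTC
  norm_num at hFTC
  linarith [hFTC]

end BetaCoalescentAux

open BetaCoalescentAux in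
/-- For the beta(a,b) measure with `1 < a < 2`,
`ν(dx) = x^(a-3)(1-x)^(b-1) dx / B(a,b)`, the first moment of the associated
subordinator is
`m = ∫₀¹ |log(1-x)| ν(dx)
   = ((a+b-1)/((a-1)(2-a))) (1 - (a+b-2)(Ψ(a+b-1) - Ψ(b)))`,
where `Ψ = Γ'/Γ` is the digamma function and `B` the beta function. -/
theorem beta_coalescent_mean
    (a b : ℝ) (ha : 1 < a) (ha2 : a < 2) (hb : 0 < b)
    (B : ℝ) (hB : B = Real.Gamma a * Real.Gamma b / Real.Gamma (a + b))
    (Ψ : ℝ → ℝ) (hΨ : ∀ x, 0 < x → Ψ x = deriv Real.Gamma x / Real.Gamma x) :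
    ∫ x in Ioo (0:ℝ) 1, |Real.log (1 - x)| * (x ^ (a - 3) * (1 - x) ^ (b - 1) / B)
      = ((a + b - 1) / ((a - 1) * (2 - a)))
          * (1 - (a + b - 2) * (Ψ (a + b - 1) - Ψ b)) := by
  have hG1 : (0:ℝ) < Real.Gamma (a - 1) := Real.Gamma_pos_of_pos (by linarith)
  have hGb : (0:ℝ) < Real.Gamma b := Real.Gamma_pos_of_pos hb
  have hGm : (0:ℝ) < Real.Gamma (a + b - 1) := Real.Gamma_pos_of_pos (by linarith)
  have hGa : Real.Gamma a = (a - 1) * Real.Gamma (a - 1) := by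
    have := Real.Gamma_add_one (s := a - 1) (by intro h; rw [sub_eq_zero] at h; linarith)
    rw [show a - 1 + 1 = a by ring] at this
    exact this
  have hGab : Real.Gamma (a + b) = (a + b - 1) * Real.Gamma (a + b - 1) := by
    have := Real.Gamma_add_one (s := a + b - 1) (by intro h; nlinarith [h])
    rw [show a + b - 1 + 1 = a + b by ring] at this
    exact this
  have hBpos : (0:ℝ) < B := by
    rw [hB, hGa, hGab]
    have : (0:ℝ) < Real.Gamma a := by rw [hGa]; nlinarith
    rw [← hGa, ← hGab]
    exact div_pos (mul_pos (by rw [hGa]; nlinarith) hGb) (by rw [hGab]; nlinarith)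
  -- Step 1: rewrite the LHS integrand
  have step1 : (∫ x in Ioo (0:ℝ) 1, |Real.log (1 - x)| * (x ^ (a - 3) * (1 - x) ^ (b - 1) / B))
      = (∫ x in Ioo (0:ℝ) 1, x ^ ((a - 2) - 1) * (1 - x) ^ (b - 1) * (-Real.log (1 - x))) / B := by
    rw [← integral_div]
    apply setIntegral_congr_fun measurableSet_Ioo
    intro x hx
    have habs : |Real.log (1 - x)| = -Real.log (1 - x) :=
      abs_of_nonpos (Real.log_nonpos (by linarith [hx.2]) (by linarith [hx.1]))
    simp only []
    rw [habs, show (a - 2) - 1 = a - 3 by ring]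
    ring
  rw [step1]
  -- Step 2: keyFTC
  have hFTC := keyFTC (a - 2) b (by linarith) (by linarith) hb
  -- Step 3: evaluate J and Beta1
  have hJ : (∫ x in Ioo (0:ℝ) 1, x ^ (a - 2) * (1 - x) ^ (b - 1) * (-Real.log (1 - x)))
      = -(Real.Gamma (a - 1) * Real.Gamma b / Real.Gamma (a + b - 1) *
          (deriv Real.Gamma b / Real.Gamma b
            - deriv Real.Gamma (a + b - 1) / Real.Gamma (a + b - 1))) := by
    have := betaLogEval (a - 1) b (by linarith) hb
    rw [show (a - 1) + b = a + b - 1 by ring] at this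
    rw [show (a - 1) - 1 = a - 2 by ring] at this
    rw [← this, ← integral_neg]
    apply setIntegral_congr_fun measurableSet_Ioo
    intro x hx
    ring
  have hB1 : (∫ x in Ioo (0:ℝ) 1, x ^ (a - 2) * (1 - x) ^ (b - 1))
      = Real.Gamma (a - 1) * Real.Gamma b / Real.Gamma (a + b - 1) := by
    have := betaEval (a - 1) b (by linarith) hb
    rw [show (a - 1) + b = a + b - 1 by ring] at this
    rw [show (a - 1) - 1 = a - 2 by ring] at this
    exact this
  rw [hJ, hB1] at hFTC
  -- Step 4: solve for the integral and finish with algebra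
  have hp : a - 2 ≠ 0 := by intro h; rw [sub_eq_zero] at h; linarith
  have hI : (∫ x in Ioo (0:ℝ) 1, x ^ ((a - 2) - 1) * (1 - x) ^ (b - 1) * (-Real.log (1 - x)))
      = ((a - 2 + b) * (-(Real.Gamma (a - 1) * Real.Gamma b / Real.Gamma (a + b - 1) *
          (deriv Real.Gamma b / Real.Gamma b
            - deriv Real.Gamma (a + b - 1) / Real.Gamma (a + b - 1))))
        - Real.Gamma (a - 1) * Real.Gamma b / Real.Gamma (a + b - 1)) / (a - 2) := by
    field_simp at hFTC ⊢
    linarith [hFTC]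
  rw [hI, hΨ (a + b - 1) (by linarith), hΨ b hb, hB, hGa, hGab]
  have h1 : a - 1 ≠ 0 := by intro h; rw [sub_eq_zero] at h; linarith
  have h2 : (2:ℝ) - a ≠ 0 := by intro h; rw [sub_eq_zero] at h; linarith
  have h3 : a + b - 1 ≠ 0 := by intro h; nlinarith [h]
  field_simp
  ring
end

section
/- For the beta(2,b) measure ν(dx) = (1/B(2,b)) x^{-1}(1-x)^{b-1} dx with b > 0, the mean and variance of S_1 equal m = b(b+1) ζ(2,b) and s² = 2 b(b+1) ζ(3,b), where ζ(·,b) is the Hurwitz zeta function. -/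
open MeasureTheory Set Real

lemma gamma_int_aux (k : ℕ) {c : ℝ} (hc : 0 < c) :
    ∫ t in Ioi (0:ℝ), t ^ k * Real.exp (-(c * t)) = (k.factorial : ℝ) / c ^ (k + 1) := by
  have h := integral_rpow_mul_exp_neg_mul_Ioi (a := (k : ℝ) + 1) (r := c) (by positivity) hc
  rw [show ((k:ℝ)+1) - 1 = (k:ℝ) by ring,
    show ((k:ℝ)+1) = ((k+1:ℕ):ℝ) by push_cast; ring] at h
  rw [setIntegral_congr_fun measurableSet_Ioi
      (fun t (ht : 0 < t) => by rw [← Real.rpow_natCast t k]), h,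
    Real.rpow_natCast, show ((k+1:ℕ):ℝ) = (k:ℝ)+1 by push_cast; ring,
    Real.Gamma_nat_eq_factorial]
  rw [div_pow, one_pow]
  ring

lemma int_on_aux (k : ℕ) {c : ℝ} (hc : 0 < c) :
    IntegrableOn (fun t : ℝ => t ^ k * Real.exp (-(c * t))) (Ioi 0) := by
  have h := integrableOn_rpow_mul_exp_neg_mul_rpow (p := 1) (s := (k:ℝ)) (b := c)
    (by exact lt_of_lt_of_le neg_one_lt_zero (Nat.cast_nonneg k)) one_pos hc
  refine h.congr_fun (fun t (ht : 0 < t) => ?_) measurableSet_Ioi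
  beta_reduce; rw [Real.rpow_one, Real.rpow_natCast, neg_mul]

lemma hsummable_aux (b : ℝ) (hb : 0 < b) (k : ℕ) (hk : 1 ≤ k) :
    Summable (fun n : ℕ => (k.factorial : ℝ) / ((n:ℝ) + b) ^ (k + 1)) := by
  have h := (Real.summable_one_div_nat_add_rpow b (k + 1)).2
    (by exact_mod_cast Nat.lt_add_of_pos_left (by omega))
  have h2 := h.mul_left (k.factorial : ℝ)
  refine h2.congr fun n => ?_
  have hpos : (0:ℝ) < (n:ℝ) + b := by positivity
  rw [abs_of_pos hpos, show ((k:ℝ)+1) = ((k+1:ℕ):ℝ) by push_cast; ring,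
    Real.rpow_natCast]
  ring

lemma key_aux (b : ℝ) (hb : 0 < b) (k : ℕ) (hk : 1 ≤ k) :
    ∫ t in Ioi (0:ℝ), (∑' n : ℕ, t ^ k * Real.exp (-(((n:ℝ) + b) * t)))
      = ∑' n : ℕ, (k.factorial : ℝ) / ((n:ℝ) + b) ^ (k + 1) := by
  have hpos : ∀ n : ℕ, (0:ℝ) < (n:ℝ) + b := fun n => by positivity
  rw [integral_tsum]
  · exact tsum_congr fun n => gamma_int_aux k (hpos n)
  · intro n
    exact ((continuous_pow k).mul (by continuity)).aestronglyMeasurable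
  · have heq : ∀ n : ℕ, ∫⁻ t in Ioi (0:ℝ), ‖t ^ k * Real.exp (-(((n:ℝ) + b) * t))‖ₑ
        = ENNReal.ofReal ((k.factorial : ℝ) / ((n:ℝ) + b) ^ (k + 1)) := by
      intro n
      rw [← gamma_int_aux k (hpos n),
        ofReal_integral_eq_lintegral_ofReal (int_on_aux k (hpos n))
          ((ae_restrict_iff' measurableSet_Ioi).2 (Filter.Eventually.of_forall
            fun t (ht : 0 < t) => by positivity))]
      refine lintegral_congr_ae ((ae_restrict_iff' measurableSet_Ioi).2
        (Filter.Eventually.of_forall fun t (ht : 0 < t) => ?_))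
      exact Real.enorm_eq_ofReal (by positivity)
    rw [funext heq, ← ENNReal.ofReal_tsum_of_nonneg
      (fun n => by positivity) (hsummable_aux b hb k hk)]
    exact ENNReal.ofReal_ne_top

lemma subst_aux (b : ℝ) (k : ℕ) :
    ∫ x in Ioo (0:ℝ) 1, |Real.log (1 - x)| ^ k * (x⁻¹ * (1 - x) ^ (b - 1))
      = ∫ t in Ioi (0:ℝ), Real.exp (-t) * (t ^ k *
          ((1 - Real.exp (-t))⁻¹ * Real.exp (-t * (b - 1)))) := by
  have himg : Ioo (0:ℝ) 1 = (fun t => 1 - Real.exp (-t)) '' Ioi 0 := by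
    ext x
    constructor
    · rintro ⟨hx0, hx1⟩
      refine ⟨-Real.log (1 - x), ?_, ?_⟩
      · simpa using Real.log_neg (by linarith) (by linarith)
      · simp [Real.exp_log (by linarith : (0:ℝ) < 1 - x)]
    · rintro ⟨t, ht, rfl⟩
      have h1 : Real.exp (-t) < 1 := Real.exp_lt_one_iff.2 (by simpa using ht)
      constructor
      · show (0:ℝ) < 1 - Real.exp (-t); linarith
      · show 1 - Real.exp (-t) < 1; have := Real.exp_pos (-t); linarith
  have hderiv : ∀ t ∈ Ioi (0:ℝ), HasDerivWithinAt (fun t => 1 - Real.exp (-t))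
      (Real.exp (-t)) (Ioi 0) t := by
    intro t _
    have h := (Real.hasDerivAt_exp (-t)).comp t (hasDerivAt_neg t)
    exact (((hasDerivAt_const t (1:ℝ)).sub h).congr_deriv (by simp) : HasDerivAt
      (fun t => 1 - Real.exp (-t)) (Real.exp (-t)) t).hasDerivWithinAt
  have hinj : InjOn (fun t => 1 - Real.exp (-t)) (Ioi 0) := by
    have : StrictMonoOn (fun t => 1 - Real.exp (-t)) (Ioi 0) := by
      intro x _ y _ hxy
      have : Real.exp (-y) < Real.exp (-x) := Real.exp_lt_exp.2 (by linarith)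
      simpa using this
    exact this.injOn
  rw [himg, integral_image_eq_integral_abs_deriv_smul measurableSet_Ioi hderiv hinj]
  refine setIntegral_congr_fun measurableSet_Ioi fun t ht => ?_
  have ht' : (0:ℝ) < t := ht
  have h1 : 1 - (1 - Real.exp (-t)) = Real.exp (-t) := by ring
  rw [smul_eq_mul, abs_of_pos (Real.exp_pos _)]
  simp only [h1]
  rw [Real.log_exp, abs_neg, abs_of_pos ht',
    Real.rpow_def_of_pos (Real.exp_pos _), Real.log_exp]

lemma expand_aux (b : ℝ) (k : ℕ) {t : ℝ} (ht : 0 < t) :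
    Real.exp (-t) * (t ^ k * ((1 - Real.exp (-t))⁻¹ * Real.exp (-t * (b - 1))))
      = ∑' n : ℕ, t ^ k * Real.exp (-(((n:ℝ) + b) * t)) := by
  have hr1 : Real.exp (-t) < 1 := Real.exp_lt_one_iff.2 (by linarith)
  have geo : ∑' n : ℕ, (Real.exp (-t)) ^ n = (1 - Real.exp (-t))⁻¹ :=
    tsum_geometric_of_lt_one (Real.exp_pos _).le hr1
  rw [← geo, ← tsum_mul_right, ← tsum_mul_left, ← tsum_mul_left]
  refine tsum_congr fun n => ?_
  rw [← Real.exp_nat_mul, ← Real.exp_add]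
  have h2 : Real.exp (-t) * Real.exp (↑n * -t + -t * (b - 1))
      = Real.exp (-((↑n + b) * t)) := by
    rw [← Real.exp_add]; ring_nf
  rw [← h2]; ring

lemma main_aux (b : ℝ) (hb : 0 < b) (k : ℕ) (hk : 1 ≤ k) :
    ∫ x in Ioo (0:ℝ) 1, |Real.log (1 - x)| ^ k * (x⁻¹ * (1 - x) ^ (b - 1))
      = ∑' n : ℕ, (k.factorial : ℝ) / ((n:ℝ) + b) ^ (k + 1) := by
  rw [subst_aux b k,
    setIntegral_congr_fun measurableSet_Ioi (fun t (ht : 0 < t) => expand_aux b k ht),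
    key_aux b hb k hk]

/-- For the beta(2,b) measure `ν(dx) = (1/B(2,b)) x⁻¹ (1-x)^(b-1) dx`, the mean
and variance of `S₁` are `m = b(b+1) ζ(2,b)` and `s² = 2 b(b+1) ζ(3,b)`, with
`ζ(s,b) = ∑_{n≥0} (n+b)^{-s}` the Hurwitz zeta function. Equivalently,
`∫₀¹ |log(1-x)| x⁻¹ (1-x)^(b-1) dx = ζ(2,b)` and
`∫₀¹ |log(1-x)|² x⁻¹ (1-x)^(b-1) dx = 2 ζ(3,b)`. -/
theorem beta_two_b_mean_variance
    (b : ℝ) (hb : 0 < b)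
    (ζ : ℝ → ℝ) (hζ : ∀ s : ℝ, 1 < s → ζ s = ∑' n : ℕ, ((n : ℝ) + b) ^ (-s)) :
    (∫ x in Ioo (0:ℝ) 1, |Real.log (1 - x)| * (x⁻¹ * (1 - x) ^ (b - 1)) = ζ 2)
    ∧ (∫ x in Ioo (0:ℝ) 1, |Real.log (1 - x)| ^ 2 * (x⁻¹ * (1 - x) ^ (b - 1))
        = 2 * ζ 3) := by
  constructor
  · have h := main_aux b hb 1 le_rfl
    simp only [pow_one] at h
    rw [h, hζ 2 one_lt_two]
    refine tsum_congr fun n => ?_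
    have hp : (0:ℝ) < (n:ℝ) + b := by positivity
    rw [Real.rpow_neg hp.le, show ((2:ℝ)) = ((2:ℕ):ℝ) by norm_num, Real.rpow_natCast]
    norm_num [Nat.factorial, div_eq_mul_inv]
  · have h := main_aux b hb 2 (by norm_num)
    rw [h, hζ 3 (by norm_num), ← tsum_mul_left]
    refine tsum_congr fun n => ?_
    have hp : (0:ℝ) < (n:ℝ) + b := by positivity
    rw [Real.rpow_neg hp.le, show ((3:ℝ)) = ((3:ℕ):ℝ) by norm_num, Real.rpow_natCast]
    norm_num [Nat.factorial, div_eq_mul_inv]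
end

section
/- If ν̄(x) ~ x^{-γ} ℓ(1/x) as x ↓ 0 for γ ∈ [0,1) and ℓ slowly varying at ∞, then the Laplace exponent satisfies Φ(z) ~ Γ(1-γ) z^γ ℓ(z) as z → ∞. -/
open MeasureTheory Set Real Filter Topology

lemma cont_g {z : ℝ} (hz : 2 ≤ z) : Continuous (fun t : ℝ => z * max (1 - t) 0 ^ (z - 1)) := by
  have h1 : (0:ℝ) ≤ z - 1 := by linarith
  exact continuous_const.mul (((continuous_const.sub continuous_id).max continuous_const).rpow_const
    (fun t => Or.inr h1))

lemma ftc_rpow {z : ℝ} (hz : 2 ≤ z) {x : ℝ} (hx0 : 0 ≤ x) (hx1 : x < 1) :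
    ∫ t in (0:ℝ)..x, z * max (1 - t) 0 ^ (z - 1) = 1 - (1 - x) ^ z := by
  have key : ∫ t in (0:ℝ)..x, z * (1 - t) ^ (z - 1) = 1 - (1 - x) ^ z := by
    have hderiv : ∀ t ∈ uIcc (0:ℝ) x,
        HasDerivAt (fun t : ℝ => -((1 - t) ^ z)) (z * (1 - t) ^ (z - 1)) t := by
      intro t ht
      rw [uIcc_of_le hx0] at ht
      have h1t : (1 - t) ≠ 0 := by
        have := ht.2
        intro h; nlinarith [ht.1, ht.2]
      have h1 : HasDerivAt (fun t : ℝ => 1 - t) (-1) t :=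
        (hasDerivAt_id t).const_sub 1 |>.congr_deriv rfl
      have h2 := (Real.hasDerivAt_rpow_const (p := z) (Or.inl h1t)).comp t h1
      have h3 := h2.neg
      exact h3.congr_deriv (by ring)
    have hcont : ContinuousOn (fun t : ℝ => z * (1 - t) ^ (z - 1)) (uIcc 0 x) := by
      intro t ht
      rw [uIcc_of_le hx0] at ht
      have h1t : (1 - t) ≠ 0 := by intro h; nlinarith [ht.1, ht.2]
      exact (continuous_const.continuousAt.mul
        (((continuous_const.sub continuous_id).continuousAt).rpow_const
          (Or.inl h1t))).continuousWithinAt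
    have := intervalIntegral.integral_eq_sub_of_hasDerivAt hderiv hcont.intervalIntegrable
    rw [this]
    simp [Real.one_rpow]
    ring
  rw [← key]
  apply intervalIntegral.integral_congr
  intro t ht
  rw [uIcc_of_le hx0] at ht
  show z * max (1 - t) 0 ^ (z - 1) = z * (1 - t) ^ (z - 1)
  rw [max_eq_left (by linarith [ht.1, ht.2] : (0:ℝ) ≤ 1 - t)]

lemma measurable_tail (ν : Measure ℝ) : Measurable (fun t : ℝ => ν (Ico t 1)) := by
  have : Antitone (fun t : ℝ => ν (Ico t 1)) := fun a b hab =>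
    measure_mono (Ico_subset_Ico_left hab)
  exact this.measurable

lemma repr_lemma (ν : Measure ℝ)
    (hfin : ∀ x : ℝ, 0 < x → ν (Ico x 1) < ⊤)
    {z : ℝ} (hz : 2 ≤ z)
    (ftc : ∀ x : ℝ, 0 ≤ x → x < 1 →
      ∫ t in (0:ℝ)..x, z * max (1 - t) 0 ^ (z - 1) = 1 - (1 - x) ^ z)
    (contg : Continuous (fun t : ℝ => z * max (1 - t) 0 ^ (z - 1))) :
    ∫ x in Ioo (0:ℝ) 1, (1 - (1 - x) ^ z) ∂ν
      = ∫ t in Ioo (0:ℝ) 1, z * (1 - t) ^ (z - 1) * (ν (Ico t 1)).toReal := by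
  set g : ℝ → ℝ := fun t => z * max (1 - t) 0 ^ (z - 1) with hg
  have hgnn : ∀ t, 0 ≤ g t := fun t =>
    mul_nonneg (by linarith) (Real.rpow_nonneg (le_max_right _ _) _)
  have layer := lintegral_comp_eq_lintegral_meas_le_mul (ν.restrict (Ioo (0:ℝ) 1))
    (f := fun x => x) (g := g)
    (Filter.Eventually.mono (ae_restrict_mem measurableSet_Ioo) (fun x hx => hx.1.le))
    aemeasurable_id
    (fun t _ => contg.intervalIntegrable _ _)
    (Filter.Eventually.of_forall hgnn)
  -- LHS of layercake equals lintegral of 1 - (1-x)^z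
  have hL : ∫⁻ x, ENNReal.ofReal (∫ t in (0:ℝ)..x, g t) ∂(ν.restrict (Ioo (0:ℝ) 1))
      = ∫⁻ x, ENNReal.ofReal (1 - (1 - x) ^ z) ∂(ν.restrict (Ioo (0:ℝ) 1)) := by
    refine lintegral_congr_ae ?_
    filter_upwards [ae_restrict_mem measurableSet_Ioo] with x hx
    rw [ftc x hx.1.le hx.2]
  -- RHS of layercake
  have hmeas_le : ∀ t : ℝ, (ν.restrict (Ioo (0:ℝ) 1)) {a : ℝ | t ≤ a}
      = ν (Ici t ∩ Ioo 0 1) := by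
    intro t
    show (ν.restrict (Ioo (0:ℝ) 1)) (Ici t) = _
    rw [Measure.restrict_apply measurableSet_Ici]
  have hR : ∫⁻ t in Ioi (0:ℝ), (ν.restrict (Ioo (0:ℝ) 1)) {a : ℝ | t ≤ a}
        * ENNReal.ofReal (g t)
      = ∫⁻ t in Ioo (0:ℝ) 1, ν (Ico t 1) * ENNReal.ofReal (g t) := by
    rw [← Ioo_union_Ici_eq_Ioi (zero_lt_one (α := ℝ)),
      lintegral_union measurableSet_Ici (by
        rw [Set.disjoint_left]; rintro x ⟨_, h2⟩ h3
        exact absurd (lt_of_lt_of_le h2 h3) (lt_irrefl x))]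
    have h2 : ∫⁻ t in Ici (1:ℝ), (ν.restrict (Ioo (0:ℝ) 1)) {a : ℝ | t ≤ a}
        * ENNReal.ofReal (g t) = 0 := by
      rw [← lintegral_zero (μ := volume.restrict (Ici (1:ℝ)))]
      refine lintegral_congr_ae ?_
      filter_upwards [ae_restrict_mem measurableSet_Ici] with t ht
      have : g t = 0 := by
        have : max (1 - t) 0 = 0 := max_eq_right (by simpa using ht)
        rw [hg]; simp only [this]
        rw [Real.zero_rpow (by linarith)]
        ring
      simp [this]
    rw [h2, add_zero]
    refine lintegral_congr_ae ?_
    filter_upwards [ae_restrict_mem measurableSet_Ioo] with t ht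
    rw [hmeas_le t]
    congr 2
    ext x
    simp only [mem_inter_iff, mem_Ici, mem_Ioo, mem_Ico]
    constructor
    · rintro ⟨h1, h2, h3⟩; exact ⟨h1, h3⟩
    · rintro ⟨h1, h2⟩; exact ⟨h1, lt_of_lt_of_le ht.1 h1, h2⟩
  -- convert both Bochner integrals to lintegrals
  have hB1 : ∫ x in Ioo (0:ℝ) 1, (1 - (1 - x) ^ z) ∂ν
      = (∫⁻ x, ENNReal.ofReal (1 - (1 - x) ^ z) ∂(ν.restrict (Ioo (0:ℝ) 1))).toReal := by
    refine integral_eq_lintegral_of_nonneg_ae ?_ ?_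
    · filter_upwards [ae_restrict_mem measurableSet_Ioo] with x hx
      have : (1 - x) ^ z ≤ 1 :=
        Real.rpow_le_one (by linarith [hx.2]) (by linarith [hx.1]) (by linarith)
      simp [this]
    · have : Measurable fun x : ℝ => 1 - (1 - x) ^ z := by fun_prop
      exact this.aestronglyMeasurable
  have hB2 : ∫ t in Ioo (0:ℝ) 1, z * (1 - t) ^ (z - 1) * (ν (Ico t 1)).toReal
      = (∫⁻ t in Ioo (0:ℝ) 1, ν (Ico t 1) * ENNReal.ofReal (g t)).toReal := by
    rw [integral_eq_lintegral_of_nonneg_ae]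
    · congr 1
      refine lintegral_congr_ae ?_
      filter_upwards [ae_restrict_mem measurableSet_Ioo] with t ht
      have h1 : (0:ℝ) ≤ z * (1 - t) ^ (z - 1) :=
        mul_nonneg (by linarith) (Real.rpow_nonneg (by linarith [ht.2]) _)
      rw [ENNReal.ofReal_mul h1, ENNReal.ofReal_toReal (hfin t ht.1).ne]
      have : g t = z * (1 - t) ^ (z - 1) := by
        rw [hg]; simp only; rw [max_eq_left (by linarith [ht.2])]
      rw [this, mul_comm]
    · filter_upwards [ae_restrict_mem measurableSet_Ioo] with t ht
      exact mul_nonneg (mul_nonneg (by linarith)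
        (Real.rpow_nonneg (by linarith [ht.2]) _)) ENNReal.toReal_nonneg
    · refine Measurable.aestronglyMeasurable ?_
      have h1 : Measurable fun t : ℝ => z * (1 - t) ^ (z - 1) := by fun_prop
      exact h1.mul ((measurable_tail ν).ennreal_toReal)
  rw [hB1, hB2, ← hL, ← hR, layer]

lemma subst_lemma (h : ℝ → ℝ) {z : ℝ} (hz : 0 < z) :
    ∫ s in Ioo (0:ℝ) z, h (s / z) = z * ∫ t in Ioo (0:ℝ) 1, h t := by
  rw [← integral_Ioc_eq_integral_Ioo, ← integral_Ioc_eq_integral_Ioo,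
    ← intervalIntegral.integral_of_le hz.le, ← intervalIntegral.integral_of_le zero_le_one]
  have := intervalIntegral.inv_mul_integral_comp_div (f := h) (a := 0) (b := z) (c := z)
  rw [zero_div, div_self hz.ne'] at this
  rw [← this]
  field_simp

lemma chain_lemma {ℓ : ℝ → ℝ} {ε z₀ : ℝ} (hε : 0 ≤ ε) (hz₀ : 1 ≤ z₀)
    (hd : ∀ z, z₀ ≤ z → ℓ (2*z) ≤ (1+ε) * ℓ z) :
    ∀ n : ℕ, ∀ z, z₀ ≤ z → ℓ (2^n * z) ≤ (1+ε)^n * ℓ z := by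
  intro n
  induction n with
  | zero => intro z hz; simp
  | succ n ih =>
    intro z hz
    have hzpos : (0:ℝ) < z := lt_of_lt_of_le zero_lt_one hz₀ |>.trans_le hz
    have h2n : (1:ℝ) ≤ 2^n := one_le_pow₀ (by norm_num)
    have h2 : z₀ ≤ 2^n * z := le_trans hz (le_mul_of_one_le_left hzpos.le h2n)
    calc ℓ (2^(n+1) * z) = ℓ (2 * (2^n * z)) := by ring_nf
      _ ≤ (1+ε) * ℓ (2^n * z) := hd _ h2
      _ ≤ (1+ε) * ((1+ε)^n * ℓ z) := by
          have := ih z hz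
          nlinarith [ih z hz]
      _ = (1+ε)^(n+1) * ℓ z := by ring

lemma dyadic_bound {gbar ℓ : ℝ → ℝ} {γ β ε z₀ t₀ : ℝ}
    (hγ0 : 0 ≤ γ) (hγ1 : γ < 1) (hβ : β = (1+γ)/2)
    (hε : 1 + ε = (2:ℝ) ^ (β - γ))
    (hz₀ : 1 ≤ z₀)
    (hℓnn : ∀ z, z₀ ≤ z → 0 ≤ ℓ z)
    (hchain : ∀ n : ℕ, ∀ z, z₀ ≤ z → ℓ (2^n * z) ≤ (1+ε)^n * ℓ z)
    (ht₀ : 0 < t₀)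
    (htb : ∀ t, 0 < t → t ≤ t₀ → gbar t ≤ (1+ε) * (t ^ (-γ) * ℓ (1/t)))
    (hanti : ∀ a b : ℝ, 0 < a → a ≤ b → gbar b ≤ gbar a)
    {z : ℝ} (hzz₀ : z₀ ≤ z) (hzt₀ : 1/t₀ ≤ z) {s : ℝ} (hs : 0 < s) (hs1 : s ≤ 1) :
    gbar (s / z) ≤ 4 * s ^ (-β) * (z ^ γ * ℓ z) := by
  have hβγ : γ ≤ β := by rw [hβ]; linarith
  have hβ1 : β ≤ 1 := by rw [hβ]; linarith
  have hβ0 : 0 ≤ β := by rw [hβ]; linarith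
  have hεnn : (0:ℝ) ≤ 1 + ε := by rw [hε]; positivity
  have hzpos : 0 < z := lt_of_lt_of_le zero_lt_one (le_trans hz₀ hzz₀)
  have hs' : (1:ℝ) ≤ 1/s := by rw [le_div_iff₀ hs]; linarith
  set n : ℕ := ⌊Real.logb 2 (1/s)⌋₊ with hn
  have hlog_nn : 0 ≤ Real.logb 2 (1/s) := Real.logb_nonneg one_lt_two hs'
  have h1 : (n:ℝ) ≤ Real.logb 2 (1/s) := Nat.floor_le hlog_nn
  have h2 : Real.logb 2 (1/s) < (n:ℝ)+1 := Nat.lt_floor_add_one _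
  have hrl : (2:ℝ) ^ Real.logb 2 (1/s) = 1/s :=
    Real.rpow_logb (by norm_num) (by norm_num) (by positivity)
  have e1 : (2:ℝ)^(n:ℝ) ≤ 1/s := by
    calc (2:ℝ)^(n:ℝ) ≤ 2 ^ Real.logb 2 (1/s) :=
          Real.rpow_le_rpow_of_exponent_le one_le_two h1
      _ = 1/s := hrl
  have e2 : 1/s < (2:ℝ)^((n:ℝ)+1) := by
    calc 1/s = 2 ^ Real.logb 2 (1/s) := hrl.symm
      _ < 2^((n:ℝ)+1) := Real.rpow_lt_rpow_of_exponent_lt one_lt_two h2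
  set A : ℝ := (2:ℝ)^((n:ℝ)+1) with hA
  have hApos : 0 < A := Real.rpow_pos_of_pos (by norm_num) _
  have hAz : (0:ℝ) < A * z := by positivity
  set t : ℝ := 1 / (A * z) with ht
  have htpos : 0 < t := by positivity
  have hts : t ≤ s / z := by
    rw [ht, div_le_div_iff₀ hAz hzpos]
    have h1s : (1:ℝ) < A * s := (div_lt_iff₀ hs).mp e2
    nlinarith [hzpos]
  have hA1 : (1:ℝ) ≤ A := Real.one_le_rpow one_le_two (by positivity)
  have htt₀ : t ≤ t₀ := by
    have h1z : 1/z ≤ t₀ := by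
      rw [div_le_iff₀ hzpos]
      have := mul_le_mul_of_nonneg_left hzt₀ ht₀.le
      calc (1:ℝ) = t₀ * (1/t₀) := by field_simp
        _ ≤ t₀ * z := by linarith
    calc t ≤ 1/z := one_div_le_one_div_of_le hzpos (le_mul_of_one_le_left hzpos.le hA1)
      _ ≤ t₀ := h1z
  have step1 : gbar (s/z) ≤ (1+ε) * (t ^ (-γ) * ℓ (1/t)) :=
    le_trans (hanti t (s/z) htpos hts) (htb t htpos htt₀)
  have h1t : 1/t = A * z := by rw [ht, one_div_one_div]
  have htg : t ^ (-γ) = A^γ * z^γ := by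
    rw [ht, one_div, Real.inv_rpow hAz.le, Real.rpow_neg hAz.le, inv_inv,
      Real.mul_rpow hApos.le hzpos.le]
  have hchainA : ℓ (A * z) ≤ (1+ε)^(n+1) * ℓ z := by
    have h := hchain (n+1) z hzz₀
    have hcast : ((2:ℝ))^(n+1) = A := by
      rw [hA, ← Real.rpow_natCast 2 (n+1)]
      push_cast
      ring_nf
    rwa [hcast] at h
  have hA2 : (2:ℝ)^((n:ℝ)+2) ≤ 4/s := by
    have h4 : (2:ℝ)^(2:ℝ) = 4 := by
      rw [show (2:ℝ) = ((2:ℕ):ℝ) from by norm_num]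
      rw [Real.rpow_natCast]
      norm_num
    have hsplit : (2:ℝ)^((n:ℝ)+2) = 2^(n:ℝ) * 4 := by
      rw [Real.rpow_add (by norm_num : (0:ℝ) < 2), h4]
    rw [hsplit]
    calc 2^(n:ℝ) * 4 ≤ (1/s) * 4 := by nlinarith [e1]
      _ = 4/s := by ring
  have key : (1+ε)^(n+2) * A^γ ≤ 4 * s^(-β) := by
    have l1 : ((1:ℝ)+ε)^(n+2) = 2 ^ ((β-γ)*((n:ℝ)+2)) := by
      rw [hε, ← Real.rpow_natCast ((2:ℝ)^(β-γ)) (n+2), ← Real.rpow_mul (by norm_num)]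
      push_cast
      ring_nf
    have l2 : A^γ = 2 ^ (((n:ℝ)+1)*γ) := by
      rw [hA, ← Real.rpow_mul (by norm_num)]
    have l3 : (β-γ)*((n:ℝ)+2) + ((n:ℝ)+1)*γ = ((n:ℝ)+2)*β - γ := by rw [hβ]; ring
    rw [l1, l2, ← Real.rpow_add (by norm_num : (0:ℝ) < 2), l3]
    calc (2:ℝ) ^ (((n:ℝ)+2)*β - γ) ≤ 2 ^ (((n:ℝ)+2)*β) :=
          Real.rpow_le_rpow_of_exponent_le one_le_two (by linarith)
      _ = ((2:ℝ)^((n:ℝ)+2))^β := by rw [← Real.rpow_mul (by norm_num)]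
      _ ≤ (4/s)^β := Real.rpow_le_rpow (Real.rpow_nonneg (by norm_num) _) hA2 hβ0
      _ = 4^β * s^(-β) := by
          rw [Real.div_rpow (by norm_num) hs.le, Real.rpow_neg hs.le, div_eq_mul_inv]
      _ ≤ 4 * s^(-β) := by
          have h4 : (4:ℝ)^β ≤ 4 := by
            calc (4:ℝ)^β ≤ 4^(1:ℝ) :=
                  Real.rpow_le_rpow_of_exponent_le (by norm_num) hβ1
              _ = 4 := Real.rpow_one 4
          exact mul_le_mul_of_nonneg_right h4 (Real.rpow_nonneg hs.le _)
  have hzℓnn : 0 ≤ z^γ * ℓ z := mul_nonneg (Real.rpow_nonneg hzpos.le _) (hℓnn z hzz₀)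
  calc gbar (s/z) ≤ (1+ε) * (t^(-γ) * ℓ (1/t)) := step1
    _ = (1+ε) * (A^γ * z^γ * ℓ (A*z)) := by rw [htg, h1t]
    _ ≤ (1+ε) * (A^γ * z^γ * ((1+ε)^(n+1) * ℓ z)) := by
        refine mul_le_mul_of_nonneg_left ?_ hεnn
        refine mul_le_mul_of_nonneg_left hchainA ?_
        positivity
    _ = ((1+ε)^(n+2) * A^γ) * (z^γ * ℓ z) := by ring
    _ ≤ (4 * s^(-β)) * (z^γ * ℓ z) := mul_le_mul_of_nonneg_right key hzℓnn
    _ = 4 * s^(-β) * (z^γ * ℓ z) := by ring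

lemma pow_factor_limit {s : ℝ} (hs : 0 < s) :
    Tendsto (fun z : ℝ => (1 - s/z) ^ (z-1)) atTop (𝓝 (Real.exp (-s))) := by
  have h0 : Tendsto (fun z : ℝ => (1 - s/z) ^ z) atTop (𝓝 (Real.exp (-s))) := by
    have := tendsto_one_add_div_rpow_exp (-s)
    refine this.congr (fun z => ?_)
    rw [neg_div, ← sub_eq_add_neg]
  have hden : Tendsto (fun z : ℝ => 1 - s/z) atTop (𝓝 1) := by
    have : Tendsto (fun z : ℝ => s/z) atTop (𝓝 0) := by
      simpa [div_eq_mul_inv] using tendsto_inv_atTop_zero.const_mul s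
    simpa using tendsto_const_nhds.sub this
  have hdiv : Tendsto (fun z : ℝ => (1 - s/z) ^ z / (1 - s/z)) atTop
      (𝓝 (Real.exp (-s))) := by
    simpa [Pi.div_def] using h0.div hden one_ne_zero
  refine hdiv.congr' ?_
  filter_upwards [eventually_gt_atTop s, eventually_gt_atTop 0] with z hz hz0
  have hb : 0 < 1 - s/z := by
    rw [sub_pos, div_lt_one hz0]; exact hz
  rw [Real.rpow_sub hb, Real.rpow_one]

lemma tail_ratio_limit {gbar ℓ : ℝ → ℝ} {γ : ℝ}
    (hℓpos : ∀ᶠ z in atTop, 0 < ℓ z)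
    (hℓslow : ∀ c : ℝ, 0 < c → Tendsto (fun z => ℓ (c * z) / ℓ z) atTop (𝓝 1))
    (htail : Tendsto (fun x => gbar x / (x ^ (-γ) * ℓ (1 / x)))
      (nhdsWithin 0 (Ioi (0:ℝ))) (𝓝 1))
    {s : ℝ} (hs : 0 < s) :
    Tendsto (fun z : ℝ => gbar (s/z) / (z^γ * ℓ z)) atTop (𝓝 (s ^ (-γ))) := by
  have h1 : Tendsto (fun z : ℝ => s/z) atTop (nhdsWithin 0 (Ioi (0:ℝ))) := by
    rw [tendsto_nhdsWithin_iff]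
    constructor
    · simpa [div_eq_mul_inv] using tendsto_inv_atTop_zero.const_mul s
    · filter_upwards [eventually_gt_atTop 0] with z hz
      exact div_pos hs hz
  have hA := htail.comp h1
  have hB := hℓslow s⁻¹ (inv_pos.mpr hs)
  have hscale : Tendsto (fun z : ℝ => s⁻¹ * z) atTop atTop :=
    Tendsto.const_mul_atTop (inv_pos.mpr hs) tendsto_id
  have hlim : Tendsto (fun z : ℝ =>
      gbar (s/z) / ((s/z) ^ (-γ) * ℓ (1/(s/z))) * (ℓ (s⁻¹ * z) / ℓ z) * s^(-γ))
      atTop (𝓝 (s^(-γ))) := by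
    simpa using (hA.mul hB).mul_const (s^(-γ))
  refine hlim.congr' ?_
  filter_upwards [eventually_gt_atTop 0, hℓpos, hscale.eventually hℓpos]
    with z hz0 hℓz hℓsz
  have hzs : (1:ℝ)/(s/z) = s⁻¹ * z := by
    rw [one_div_div, div_eq_inv_mul]
  rw [hzs]
  have hdr : (s/z) ^ (-γ) = s^(-γ) / z^(-γ) := Real.div_rpow hs.le hz0.le (-γ)
  have hzg : z^(-γ) = (z^γ)⁻¹ := Real.rpow_neg hz0.le γ
  have hsg : (0:ℝ) < s^(-γ) := Real.rpow_pos_of_pos hs _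
  have hzgp : (0:ℝ) < z^γ := Real.rpow_pos_of_pos hz0 _
  have hSZ : (s/z) ^ (-γ) = s^(-γ) * z^γ := by
    rw [hdr, hzg]; field_simp
  have cancel : ∀ a S Z L L1 : ℝ, S ≠ 0 → Z ≠ 0 → L ≠ 0 → L1 ≠ 0 →
      a / (S * Z * L1) * (L1 / L) * S = a / (Z * L) := by
    intros a S Z L L1 h1 h2 h3 h4
    field_simp
  simp only [hzs, hSZ]
  exact cancel _ _ _ _ _ hsg.ne' hzgp.ne' hℓz.ne' hℓsz.ne'

set_option maxHeartbeats 1600000 in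
/-- Karamata-type Tauberian theorem: if the tail `ν̄(x) = ν([x,1))` satisfies
`ν̄(x) ~ x^(-γ) ℓ(1/x)` as `x ↓ 0` with `γ ∈ [0,1)` and `ℓ` slowly varying at
`∞`, then the Laplace exponent satisfies `Φ(z) ~ Γ(1-γ) z^γ ℓ(z)` as `z → ∞`. -/
theorem laplace_exponent_regular_variation
    (ν : Measure ℝ) (γ : ℝ) (hγ0 : 0 ≤ γ) (hγ1 : γ < 1)
    (hx : Integrable (fun x => x) (ν.restrict (Ioo (0:ℝ) 1)))
    (nubar : ℝ → ℝ)
    (hfin : ∀ x : ℝ, 0 < x → ν (Ico x 1) < ⊤)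
    (hnubar : ∀ x : ℝ, 0 < x → nubar x = (ν (Ico x 1)).toReal)
    (ℓ : ℝ → ℝ)
    (hℓpos : ∀ᶠ z in atTop, 0 < ℓ z)
    (hℓslow : ∀ c : ℝ, 0 < c → Tendsto (fun z => ℓ (c * z) / ℓ z) atTop (nhds 1))
    (htail : Tendsto (fun x => nubar x / (x ^ (-γ) * ℓ (1 / x)))
      (nhdsWithin 0 (Ioi (0:ℝ))) (nhds 1))
    (Φ : ℝ → ℝ)
    (hΦ : ∀ z : ℝ, 0 ≤ z → Φ z = ∫ x in Ioo (0:ℝ) 1, (1 - (1 - x) ^ z) ∂ν) :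
    Tendsto (fun z => Φ z / (Real.Gamma (1 - γ) * z ^ γ * ℓ z)) atTop (nhds 1) := by
  classical
  set gbar : ℝ → ℝ := fun t => (ν (Ico t 1)).toReal with hgbar
  set β : ℝ := (1+γ)/2 with hβdef
  set ε : ℝ := 2 ^ ((1-γ)/2 : ℝ) - 1 with hεdef
  have hβ : β = (1+γ)/2 := hβdef
  have hε : 1 + ε = (2:ℝ) ^ (β - γ) := by
    rw [hεdef, hβdef]
    have : (1+γ)/2 - γ = (1-γ)/2 := by ring
    rw [this]
    ring
  have hεpos : 0 < ε := by
    have h1 : (1:ℝ) < 2 ^ ((1-γ)/2 : ℝ) :=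
      Real.one_lt_rpow_iff_of_pos two_pos |>.mpr (Or.inl ⟨one_lt_two, by linarith⟩)
    rw [hεdef]; linarith
  have hβγ : γ < β := by rw [hβdef]; linarith
  have hβ1 : β < 1 := by rw [hβdef]; linarith
  have hβ0 : 0 < β := by rw [hβdef]; linarith
  have hanti : ∀ a b : ℝ, 0 < a → a ≤ b → gbar b ≤ gbar a := fun a b ha hab =>
    ENNReal.toReal_mono (hfin a ha).ne (measure_mono (Ico_subset_Ico_left hab))
  have hgbar_nn : ∀ t, 0 ≤ gbar t := fun _ => ENNReal.toReal_nonneg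
  have htail' : Tendsto (fun x => gbar x / (x ^ (-γ) * ℓ (1/x)))
      (nhdsWithin 0 (Ioi (0:ℝ))) (nhds 1) := by
    refine htail.congr' ?_
    filter_upwards [eventually_mem_nhdsWithin] with x (hx : x ∈ Ioi (0:ℝ))
    rw [hnubar x hx]
  -- doubling constants
  obtain ⟨z₀, hz₀1, hz₀⟩ : ∃ z₀ : ℝ, 1 ≤ z₀ ∧
      ∀ z, z₀ ≤ z → 0 < ℓ z ∧ ℓ (2*z) ≤ (1+ε) * ℓ z := by
    have h2 := hℓslow 2 two_pos
    have hev := (h2.eventually_lt_const (show (1:ℝ) < 1+ε by linarith)).and hℓpos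
    obtain ⟨M, hM⟩ := eventually_atTop.mp hev
    refine ⟨max M 1, le_max_right _ _, fun z hz => ?_⟩
    obtain ⟨h1, h2'⟩ := hM z (le_trans (le_max_left _ _) hz)
    exact ⟨h2', le_of_lt ((div_lt_iff₀ h2').mp h1)⟩
  have hℓnn : ∀ z, z₀ ≤ z → 0 ≤ ℓ z := fun z hz => ((hz₀ z hz).1).le
  have hchain := chain_lemma hεpos.le hz₀1 (fun z hz => (hz₀ z hz).2)
  -- tail bound constants
  obtain ⟨t₀, ht₀pos, ht₀1, htb⟩ : ∃ t₀ : ℝ, 0 < t₀ ∧ t₀ ≤ 1 ∧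
      ∀ t, 0 < t → t ≤ t₀ → gbar t ≤ (1+ε) * (t ^ (-γ) * ℓ (1/t)) := by
    have hev1 : ∀ᶠ t in nhdsWithin 0 (Ioi (0:ℝ)),
        gbar t / (t^(-γ) * ℓ (1/t)) < 1+ε :=
      htail'.eventually_lt_const (by linarith)
    have hev2 : ∀ᶠ t in nhdsWithin 0 (Ioi (0:ℝ)), 0 < ℓ (1/t) := by
      have h1t : Tendsto (fun t : ℝ => 1/t) (nhdsWithin 0 (Ioi (0:ℝ))) atTop := by
        simpa [one_div] using tendsto_inv_nhdsGT_zero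
      exact h1t.eventually hℓpos
    obtain ⟨u, hu, husub⟩ := mem_nhdsGT_iff_exists_Ioc_subset.mp (hev1.and hev2)
    refine ⟨min u 1, lt_min hu zero_lt_one, min_le_right _ _, fun t ht htle => ?_⟩
    have hmem := husub ⟨ht, le_trans htle (min_le_left _ _)⟩
    have hpos : 0 < t^(-γ) * ℓ (1/t) :=
      mul_pos (Real.rpow_pos_of_pos ht _) hmem.2
    exact le_of_lt ((div_lt_iff₀ hpos).mp hmem.1)
  -- the dominated convergence setup
  set Z : ℝ := max (max z₀ (1/t₀)) 2 with hZ
  set I : ℝ → ℝ := fun z => ∫ s in Ioi (0:ℝ),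
    (Ioo (0:ℝ) z).indicator (fun s => (1 - s/z)^(z-1) * gbar (s/z) / (z^γ * ℓ z)) s with hI
  set bound : ℝ → ℝ := fun s =>
    (Ioc (0:ℝ) 1).indicator (fun s => 4 * s ^ (-β)) s + (1+ε) * Real.exp (-(1/2) * s)
    with hbound_def
  have hbound_nn : ∀ s, 0 ≤ bound s := by
    intro s
    rw [hbound_def]
    have h1 : 0 ≤ (Ioc (0:ℝ) 1).indicator (fun s => 4 * s ^ (-β)) s := by
      apply Set.indicator_nonneg
      intro t ht
      exact mul_nonneg (by norm_num) (Real.rpow_nonneg ht.1.le _)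
    have h2 : 0 ≤ (1+ε) * Real.exp (-(1/2) * s) :=
      mul_nonneg (by linarith) (Real.exp_nonneg _)
    simpa using add_nonneg h1 h2
  have hIlim : Tendsto I atTop (nhds (Real.Gamma (1-γ))) := by
    have hG : Real.Gamma (1-γ) = ∫ s in Ioi (0:ℝ), Real.exp (-s) * s ^ (-γ) := by
      rw [Real.Gamma_eq_integral (by linarith : (0:ℝ) < 1-γ)]
      simp only [show (1:ℝ) - γ - 1 = -γ from by ring]
    rw [hI, hG]
    apply tendsto_integral_filter_of_dominated_convergence bound
    · -- measurability
      filter_upwards with z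
      apply Measurable.aestronglyMeasurable
      apply Measurable.indicator _ measurableSet_Ioo
      have hm1 : Measurable fun s : ℝ => (1 - s/z)^(z-1) := by fun_prop
      have hm2 : Measurable fun s : ℝ => gbar (s/z) := by
        rw [hgbar]
        exact (measurable_tail ν).ennreal_toReal.comp (measurable_id.div_const z)
      exact (hm1.mul hm2).div_const _
    · -- boundedness
      filter_upwards [eventually_ge_atTop Z] with z hzZ
      rw [ae_restrict_iff' measurableSet_Ioi]
      refine Filter.Eventually.of_forall (fun s hs => ?_)
      have hzz₀ : z₀ ≤ z := le_trans (le_trans (le_max_left _ _) (le_max_left _ _)) hzZ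
      have hzt₀ : 1/t₀ ≤ z := le_trans (le_trans (le_max_right _ _) (le_max_left _ _)) hzZ
      have hz2 : (2:ℝ) ≤ z := le_trans (le_max_right _ _) hzZ
      have hzpos : (0:ℝ) < z := by linarith
      have hℓz : 0 < ℓ z := (hz₀ z hzz₀).1
      have hD : 0 < z^γ * ℓ z := mul_pos (Real.rpow_pos_of_pos hzpos _) hℓz
      by_cases hmem : s ∈ Ioo (0:ℝ) z
      · rw [Set.indicator_of_mem hmem]
        obtain ⟨hs0, hsz⟩ := hmem
        have hszlt : s/z < 1 := (div_lt_one hzpos).mpr hsz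
        have hbase0 : 0 ≤ 1 - s/z := by linarith
        have hbase1 : 1 - s/z ≤ 1 := by
          have : 0 < s/z := div_pos hs0 hzpos
          linarith
        have hpow_nn : 0 ≤ (1 - s/z)^(z-1) := Real.rpow_nonneg hbase0 _
        have hval_nn : 0 ≤ (1 - s/z)^(z-1) * gbar (s/z) / (z^γ * ℓ z) :=
          div_nonneg (mul_nonneg hpow_nn (hgbar_nn _)) hD.le
        rw [Real.norm_eq_abs, abs_of_nonneg hval_nn]
        by_cases hs1 : s ≤ 1
        · -- small s case
          have hdb := dyadic_bound hγ0 hγ1 hβ hε hz₀1 hℓnn hchain ht₀pos htb hanti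
            hzz₀ hzt₀ hs0 hs1
          have hpow1 : (1 - s/z)^(z-1) ≤ 1 :=
            Real.rpow_le_one hbase0 hbase1 (by linarith)
          have hb : bound s = 4 * s ^ (-β) + (1+ε) * Real.exp (-(1/2) * s) := by
            have hmem' : s ∈ Ioc (0:ℝ) 1 := ⟨hs0, hs1⟩
            simp only [hbound_def, Set.indicator_of_mem hmem']
          rw [hb]
          have hmain : (1 - s/z)^(z-1) * gbar (s/z) / (z^γ * ℓ z) ≤ 4 * s ^ (-β) := by
            rw [div_le_iff₀ hD]
            calc (1 - s/z)^(z-1) * gbar (s/z) ≤ 1 * (4 * s^(-β) * (z^γ * ℓ z)) := by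
                  apply mul_le_mul hpow1 hdb (hgbar_nn _) zero_le_one
              _ = 4 * s^(-β) * (z^γ * ℓ z) := one_mul _
          have : 0 ≤ (1+ε) * Real.exp (-(1/2) * s) := by positivity
          linarith
        · -- large s case
          push_neg at hs1
          have h1z : 0 < 1/z := by positivity
          have h1zt₀ : 1/z ≤ t₀ := by
            rw [div_le_iff₀ hzpos]
            calc (1:ℝ) = t₀ * (1/t₀) := by field_simp
              _ ≤ t₀ * z := by
                have := mul_le_mul_of_nonneg_left hzt₀ ht₀pos.le
                linarith
          have hg1 : gbar (s/z) ≤ gbar (1/z) := by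
            apply hanti _ _ h1z
            rw [div_le_div_iff₀ hzpos hzpos]
            nlinarith
          have hg2 : gbar (1/z) ≤ (1+ε) * ((1/z)^(-γ) * ℓ (1/(1/z))) := htb _ h1z h1zt₀
          have hinv : (1:ℝ)/(1/z) = z := one_div_one_div z
          have hzg : ((1:ℝ)/z)^(-γ) = z^γ := by
            rw [one_div, Real.inv_rpow hzpos.le, Real.rpow_neg hzpos.le, inv_inv]
          rw [hinv, hzg] at hg2
          have hgb : gbar (s/z) ≤ (1+ε) * (z^γ * ℓ z) := le_trans hg1 hg2
          have hexp : (1 - s/z)^(z-1) ≤ Real.exp (-(1/2) * s) := by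
            have he1 : 1 - s/z ≤ Real.exp (-(s/z)) := by
              have := Real.add_one_le_exp (-(s/z))
              linarith
            have he2 : (1 - s/z)^(z-1) ≤ (Real.exp (-(s/z)))^(z-1) :=
              Real.rpow_le_rpow hbase0 he1 (by linarith)
            have he3 : (Real.exp (-(s/z)))^(z-1) = Real.exp (-(s/z) * (z-1)) :=
              (Real.exp_mul _ _).symm
            have he4 : -(s/z) * (z-1) ≤ -(1/2) * s := by
              have h0 : -(s/z) * (z-1) = -(s*(z-1))/z := by ring
              have h1' : -(1/2)*s = -(s/2) := by ring
              rw [h0, h1', div_le_iff₀ hzpos]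
              nlinarith [mul_nonneg hs0.le (show (0:ℝ) ≤ z - 2 by linarith)]
            calc (1 - s/z)^(z-1) ≤ (Real.exp (-(s/z)))^(z-1) := he2
              _ = Real.exp (-(s/z) * (z-1)) := he3
              _ ≤ Real.exp (-(1/2) * s) := Real.exp_le_exp.mpr he4
          have hmain : (1 - s/z)^(z-1) * gbar (s/z) / (z^γ * ℓ z)
              ≤ (1+ε) * Real.exp (-(1/2) * s) := by
            rw [div_le_iff₀ hD]
            calc (1 - s/z)^(z-1) * gbar (s/z)
                ≤ Real.exp (-(1/2) * s) * ((1+ε) * (z^γ * ℓ z)) := by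
                  apply mul_le_mul hexp hgb (hgbar_nn _) (Real.exp_nonneg _)
              _ = (1+ε) * Real.exp (-(1/2) * s) * (z^γ * ℓ z) := by ring
          have hb : bound s = 0 + (1+ε) * Real.exp (-(1/2) * s) := by
            have hmem' : s ∉ Ioc (0:ℝ) 1 := fun h => absurd h.2 (not_le.mpr hs1)
            simp only [hbound_def, Set.indicator_of_notMem hmem']
          rw [hb, zero_add]
          exact hmain
      · rw [Set.indicator_of_notMem hmem]
        simpa using hbound_nn s
    · -- integrability of bound
      apply Integrable.add
      · have hii : IntervalIntegrable (fun s : ℝ => s ^ (-β)) volume 0 1 :=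
          intervalIntegral.intervalIntegrable_rpow' (by linarith)
        have h1 : IntegrableOn (fun s : ℝ => s ^ (-β)) (Ioc 0 1) volume := hii.1
        have h2 : IntegrableOn (fun s : ℝ => 4 * s ^ (-β)) (Ioc 0 1) volume :=
          h1.const_mul 4
        exact ((h2.integrable_indicator measurableSet_Ioc).restrict)
      · have h3 : IntegrableOn (fun s : ℝ => Real.exp (-(1/2) * s)) (Ioi 0) volume :=
          exp_neg_integrableOn_Ioi 0 (by norm_num : (0:ℝ) < 1/2)
        exact h3.const_mul (1+ε)
    · -- pointwise limit
      rw [ae_restrict_iff' measurableSet_Ioi]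
      refine Filter.Eventually.of_forall (fun s hs => ?_)
      have hs0 : (0:ℝ) < s := hs
      have hlim := (pow_factor_limit hs0).mul (tail_ratio_limit hℓpos hℓslow htail' hs0)
      refine hlim.congr' ?_
      filter_upwards [eventually_gt_atTop s, eventually_gt_atTop 0] with z hzs hz0
      simp only [Set.indicator_of_mem (show s ∈ Ioo (0:ℝ) z from ⟨hs0, hzs⟩)]
      rw [mul_div_assoc]
  -- final assembly
  have hΓpos : 0 < Real.Gamma (1-γ) := Real.Gamma_pos_of_pos (by linarith)
  have hfinal : ∀ᶠ z in atTop,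
      I z / Real.Gamma (1-γ) = Φ z / (Real.Gamma (1-γ) * z ^ γ * ℓ z) := by
    filter_upwards [eventually_ge_atTop Z] with z hzZ
    have hzz₀ : z₀ ≤ z := le_trans (le_trans (le_max_left _ _) (le_max_left _ _)) hzZ
    have hz2 : (2:ℝ) ≤ z := le_trans (le_max_right _ _) hzZ
    have hzpos : (0:ℝ) < z := by linarith
    have hℓz : 0 < ℓ z := (hz₀ z hzz₀).1
    have hrepr : Φ z = ∫ t in Ioo (0:ℝ) 1, z * (1-t)^(z-1) * gbar t := by
      rw [hΦ z (by linarith)]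
      exact repr_lemma ν hfin hz2 (fun x hx0 hx1 => ftc_rpow hz2 hx0 hx1) (cont_g hz2)
    have hsubst : ∫ s in Ioo (0:ℝ) z, (1 - s/z)^(z-1) * gbar (s/z)
        = z * ∫ t in Ioo (0:ℝ) 1, (1-t)^(z-1) * gbar t :=
      subst_lemma (fun t => (1-t)^(z-1) * gbar t) hzpos
    have hΦz : Φ z = ∫ s in Ioo (0:ℝ) z, (1 - s/z)^(z-1) * gbar (s/z) := by
      rw [hsubst, hrepr, ← integral_const_mul]
      congr 1
      ext t
      ring
    have hIz : I z = Φ z / (z^γ * ℓ z) := by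
      rw [hI]
      simp only
      rw [integral_indicator measurableSet_Ioo,
        Measure.restrict_restrict measurableSet_Ioo,
        inter_eq_left.mpr (Ioo_subset_Ioi_self), integral_div, ← hΦz]
    rw [hIz]
    rw [show Real.Gamma (1-γ) * z^γ * ℓ z = Real.Gamma (1-γ) * (z^γ * ℓ z) from by ring]
    rw [div_div, mul_comm (z^γ * ℓ z) (Real.Gamma (1-γ)), ← div_div]
  have : Tendsto (fun z => I z / Real.Gamma (1-γ)) atTop
      (nhds (Real.Gamma (1-γ) / Real.Gamma (1-γ))) := hIlim.div_const _
  rw [div_self hΓpos.ne'] at this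
  exact this.congr' hfinal
end
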